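/- arXiv:2007.02892 — 2 statements merged into one kernel-verified Lean document; each statement's English description precedes it below -/
import Mathlib

section
/- Assume (q), let f ∈ C¹[0,1] with f(0)=0, h := f′, let c* be the threshold for problem (P_c⁰⁰), let z* be the solution of (P_{c*}⁰⁰), fix c > c*, and let z_β be the solution of (P_c) with z_β(1) = β(c) (the minimal admissible right-hand value). For every φ₀ ∈ (0,1) there is a unique ẑ_{φ₀} ∈ C[0,1] ∩ C¹(0,1) satisfying ẑ̇_{φ₀}(φ) = h(φ) − c − q(φ)/ẑ_{φ₀}(φ) on (0,1) and ẑ_{φ₀}(φ₀) = z*(φ₀); it satisfies ẑ_{φ₀}(0) = 0, ẑ_{φ₀} < z* on (φ₀, 1], and ẑ_{φ₀} ≥ z_β on (0,1]. Moreover, if 0 < φ₁ < φ₀ then ẑ_{φ₁} < ẑ_{φ₀} on (0,1]. -/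
open Set Filter Topology MeasureTheory

noncomputable section

/-- `z` is a solution of the singular first-order ODE ż(φ) = h(φ) − c − q(φ)/z(φ)
on (0,1), negative on (0,1), and continuous on [0,1]. -/
def SolODE (h q : ℝ → ℝ) (c : ℝ) (z : ℝ → ℝ) : Prop :=
  ContinuousOn z (Icc 0 1) ∧
  (∀ φ ∈ Ioo (0:ℝ) 1, HasDerivAt z (h φ - c - q φ / z φ) φ) ∧
  (∀ φ ∈ Ioo (0:ℝ) 1, z φ < 0)

/-- Problem (P_c): the singular ODE with the left boundary condition z(0) = 0. -/
def PC (h q : ℝ → ℝ) (c : ℝ) (z : ℝ → ℝ) : Prop :=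
  SolODE h q c z ∧ z 0 = 0

/-- Problem (P_c⁰⁰): the singular ODE with the two boundary conditions z(0) = z(1) = 0. -/
def PC00 (h q : ℝ → ℝ) (c : ℝ) (z : ℝ → ℝ) : Prop :=
  PC h q c z ∧ z 1 = 0

/-- Solution of the auxiliary problem \eqref{first order problem hat}: the ODE on (0,1),
continuous on [0,1], with initial value z*(φ₀) at φ₀. -/
def HatSol (h q : ℝ → ℝ) (c φ₀ : ℝ) (zstar zhat : ℝ → ℝ) : Prop :=
  ContinuousOn zhat (Icc 0 1) ∧
  (∀ φ ∈ Ioo (0:ℝ) 1, HasDerivAt zhat (h φ - c - q φ / zhat φ) φ) ∧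
  zhat φ₀ = zstar φ₀

namespace S17

/-- slope sign lemma -/
lemma slope_signs {w : ℝ → ℝ} {d τ : ℝ} (hd : HasDerivAt w d τ) (h0 : w τ = 0)
    (hneg : d < 0) :
    (∀ᶠ t in 𝓝[>] τ, w t < 0) ∧ (∀ᶠ t in 𝓝[<] τ, 0 < w t) := by
  have hs := hasDerivAt_iff_tendsto_slope.mp hd
  have hev : ∀ᶠ t in 𝓝[≠] τ, slope w τ t < 0 := hs (Iio_mem_nhds hneg)
  constructor
  · have h1 : ∀ᶠ t in 𝓝[>] τ, slope w τ t < 0 :=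
      hev.filter_mono (nhdsWithin_mono τ (fun t ht => ne_of_gt ht))
    have h2 : ∀ᶠ t in 𝓝[>] τ, τ < t := eventually_mem_nhdsWithin
    filter_upwards [h1, h2] with t h1 h2
    rw [slope_def_field, h0, sub_zero] at h1
    have h3 : 0 < t - τ := by linarith
    rcases div_neg_iff.mp h1 with ⟨_, h⟩ | ⟨h, _⟩
    · linarith
    · exact h
  · have h1 : ∀ᶠ t in 𝓝[<] τ, slope w τ t < 0 :=
      hev.filter_mono (nhdsWithin_mono τ (fun t ht => ne_of_lt ht))
    have h2 : ∀ᶠ t in 𝓝[<] τ, t < τ := eventually_mem_nhdsWithin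
    filter_upwards [h1, h2] with t h1 h2
    rw [slope_def_field, h0, sub_zero] at h1
    have h3 : t - τ < 0 := by linarith
    rcases div_neg_iff.mp h1 with ⟨h, _⟩ | ⟨_, h⟩
    · exact h
    · linarith

/-- monotone helper -/
lemma monoHelp {w : ℝ → ℝ} {A B : ℝ} (hc : ContinuousOn w (Icc A B))
    (hd : ∀ t ∈ Ioo A B, ∃ d, HasDerivAt w d t ∧ 0 ≤ d) : MonotoneOn w (Icc A B) := by
  apply monotoneOn_of_deriv_nonneg (convex_Icc A B) hc
  · intro t ht
    rw [interior_Icc] at ht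
    exact ((hd t ht).choose_spec.1).differentiableAt.differentiableWithinAt
  · intro t ht
    rw [interior_Icc] at ht
    obtain ⟨d, hD, hd0⟩ := hd t ht
    rw [hD.deriv]; exact hd0

/-- no upcrossing lemma: if w has negative-derivative zeros, it cannot go from ≤0 to >0. -/
lemma noup {w : ℝ → ℝ} {s u : ℝ} (hsu : s < u) (hc : ContinuousOn w (Icc s u))
    (hzero : ∀ τ ∈ Ico s u, w τ = 0 → ∀ᶠ t in 𝓝[>] τ, w t < 0)
    (hs : w s ≤ 0) (hu : 0 < w u) : False := by
  set S : Set ℝ := Icc s u ∩ w ⁻¹' Iic 0 with hS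
  have hSne : S.Nonempty := ⟨s, ⟨le_refl s, hsu.le⟩, by simpa using hs⟩
  have hSbdd : BddAbove S := ⟨u, fun x hx => hx.1.2⟩
  have hScl : IsClosed S := hc.preimage_isClosed_of_isClosed isClosed_Icc isClosed_Iic
  set τ := sSup S with hτdef
  have hτS : τ ∈ S := hScl.csSup_mem hSne hSbdd
  have hwτ : w τ ≤ 0 := hτS.2
  have hτu : τ < u := by
    rcases lt_or_eq_of_le hτS.1.2 with h | h
    · exact h
    · exfalso; rw [h] at hwτ; linarith
  have hτ0 : w τ = 0 := by
    rcases lt_or_eq_of_le hwτ with h | h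
    · exfalso
      -- IVT on [τ, u] gives a zero ρ > τ in S
      have hIcc : Icc (w τ) (w u) ⊆ w '' Icc τ u :=
        intermediate_value_Icc hτu.le (hc.mono (Icc_subset_Icc hτS.1.1 le_rfl))
      have h0m : (0:ℝ) ∈ Icc (w τ) (w u) := ⟨h.le, hu.le⟩
      obtain ⟨ρ, hρm, hρ0⟩ := hIcc h0m
      have hρS : ρ ∈ S := ⟨⟨hτS.1.1.trans hρm.1, hρm.2.trans (le_refl u)⟩, by simp [hρ0]⟩
      have : ρ ≤ τ := le_csSup hSbdd hρS
      have : ρ = τ := le_antisymm this hρm.1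
      rw [this] at hρ0; rw [hρ0] at h; exact lt_irrefl _ h
    · exact h
  have hev := hzero τ ⟨hτS.1.1, hτu⟩ hτ0
  have hmem : Ioo τ u ∈ 𝓝[>] τ := Ioo_mem_nhdsGT_of_mem ⟨le_refl τ, hτu⟩
  have hev2 : ∀ᶠ t in 𝓝[>] τ, w t < 0 ∧ t ∈ Ioo τ u :=
    hev.and (eventually_of_mem hmem (fun x hx => hx))
  obtain ⟨t, htw, htm⟩ := hev2.exists
  have htS : t ∈ S := ⟨⟨hτS.1.1.trans htm.1.le, htm.2.le⟩, by simp [htw.le]⟩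
  have : t ≤ τ := le_csSup hSbdd htS
  linarith [htm.1]


lemma clamp_id {t : ℝ} (h0 : 0 ≤ t) (h1 : t ≤ 1) : max 0 (min 1 t) = t := by
  rw [min_eq_right h1, max_eq_right h0]

lemma clamp_mem (t : ℝ) : max 0 (min 1 t) ∈ Icc (0:ℝ) 1 :=
  ⟨le_max_left _ _, max_le (by norm_num) (min_le_left _ _)⟩

lemma lipdiv {c' Q ρ qt ht : ℝ} (hρ : 0 < ρ) (hq0 : 0 ≤ qt) (hqQ : qt ≤ Q) :
    LipschitzOnWith (Real.toNNReal (Q/ρ^2)) (fun x => ht - c' - qt / x) (Iic (-ρ)) := by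
  rw [lipschitzOnWith_iff_dist_le_mul]
  intro x hx y hy
  simp only [mem_Iic] at hx hy
  have hx0 : x < 0 := lt_of_le_of_lt hx (by linarith)
  have hy0 : y < 0 := lt_of_le_of_lt hy (by linarith)
  have hxy : ρ^2 ≤ x*y := by nlinarith
  have hQ : 0 ≤ Q := le_trans hq0 hqQ
  have hcoe : (Real.toNNReal (Q/ρ^2) : ℝ) = Q/ρ^2 :=
    Real.coe_toNNReal _ (div_nonneg hQ (by positivity))
  rw [hcoe, Real.dist_eq, Real.dist_eq]
  have hx' : x ≠ 0 := ne_of_lt hx0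
  have hy' : y ≠ 0 := ne_of_lt hy0
  have hid : (ht - c' - qt/x) - (ht - c' - qt/y) = qt*(x - y)/(x*y) := by
    field_simp
    ring
  rw [hid, abs_div, abs_mul, abs_of_pos (by nlinarith : (0:ℝ) < x*y)]
  rw [div_le_iff₀ (by nlinarith : (0:ℝ) < x*y)]
  have h2 : abs qt = qt := abs_of_nonneg hq0
  rw [h2]
  have h3 : Q/ρ^2 * |x-y| * (x*y) ≥ Q/ρ^2 * |x-y| * ρ^2 := by
    apply mul_le_mul_of_nonneg_left hxy (by positivity)
  have h4 : Q/ρ^2 * |x-y| * ρ^2 = Q * |x-y| := by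
    field_simp
  nlinarith [abs_nonneg (x-y), mul_le_mul_of_nonneg_right hqQ (abs_nonneg (x-y))]

lemma negbound {z₁ z₂ : ℝ → ℝ} {A B : ℝ} (hAB : A ≤ B)
    (hc₁ : ContinuousOn z₁ (Icc A B)) (hc₂ : ContinuousOn z₂ (Icc A B))
    (hn : ∀ t ∈ Icc A B, z₁ t < 0 ∧ z₂ t < 0) :
    ∃ ρ > 0, ∀ t ∈ Icc A B, z₁ t ≤ -ρ ∧ z₂ t ≤ -ρ := by
  obtain ⟨ts, hts, hmax⟩ := isCompact_Icc.exists_isMaxOn (f := fun t => z₁ t ⊔ z₂ t)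
    (nonempty_Icc.mpr hAB) (hc₁.sup hc₂)
  have hmax' := isMaxOn_iff.mp hmax
  refine ⟨-(z₁ ts ⊔ z₂ ts), ?_, fun t ht => ?_⟩
  · have h0 := hn ts hts
    have : z₁ ts ⊔ z₂ ts < 0 := sup_lt_iff.mpr ⟨h0.1, h0.2⟩
    linarith
  · have h2 := hmax' t ht
    have h3 : z₁ t ≤ z₁ t ⊔ z₂ t := le_sup_left
    have h4 : z₂ t ≤ z₁ t ⊔ z₂ t := le_sup_right
    constructor <;> [skip; skip] <;> simp only [neg_neg] <;> linarith

lemma qbound {q : ℝ → ℝ} (hq_cont : ContinuousOn q (Icc 0 1))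
    (hqnn : ∀ t ∈ Icc (0:ℝ) 1, 0 ≤ q t) :
    ∃ Q ≥ 0, ∀ t ∈ Icc (0:ℝ) 1, q t ≤ Q := by
  obtain ⟨ts, hts, hmax⟩ := isCompact_Icc.exists_isMaxOn (nonempty_Icc.mpr (by norm_num))
    hq_cont
  exact ⟨q ts, hqnn ts hts, fun t ht => isMaxOn_iff.mp hmax t ht⟩

/-- same-c uniqueness from an interior touching point, on an open interval -/
lemma eq_of_touch {h q : ℝ → ℝ} {c' : ℝ} (hq_cont : ContinuousOn q (Icc 0 1))
    (hqnn : ∀ t ∈ Icc (0:ℝ) 1, 0 ≤ q t)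
    {a b : ℝ} (ha : 0 ≤ a) (hb : b ≤ 1)
    {z₁ z₂ : ℝ → ℝ}
    (hd₁ : ∀ t ∈ Ioo a b, HasDerivAt z₁ (h t - c' - q t / z₁ t) t)
    (hd₂ : ∀ t ∈ Ioo a b, HasDerivAt z₂ (h t - c' - q t / z₂ t) t)
    (hn₁ : ∀ t ∈ Ioo a b, z₁ t < 0) (hn₂ : ∀ t ∈ Ioo a b, z₂ t < 0)
    {t₀ : ℝ} (ht₀ : t₀ ∈ Ioo a b) (heq : z₁ t₀ = z₂ t₀) : EqOn z₁ z₂ (Ioo a b) := by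
  intro t' ht'
  set A := (a + min t₀ t')/2 with hA
  set B := (b + max t₀ t')/2 with hB
  have haA : a < A := by
    have h1 : a < min t₀ t' := lt_min ht₀.1 ht'.1
    simp only [hA]; linarith
  have hAm : A < min t₀ t' := by
    have h1 : a < min t₀ t' := lt_min ht₀.1 ht'.1
    simp only [hA]; linarith
  have hmB : max t₀ t' < B := by
    have h1 : max t₀ t' < b := max_lt ht₀.2 ht'.2
    simp only [hB]; linarith
  have hBb : B < b := by
    have h1 : max t₀ t' < b := max_lt ht₀.2 ht'.2
    simp only [hB]; linarith
  have hAB : A ≤ B := by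
    have := min_le_max (a := t₀) (b := t')
    linarith
  have hsub : Icc A B ⊆ Ioo a b := fun t ht => ⟨lt_of_lt_of_le haA ht.1, lt_of_le_of_lt ht.2 hBb⟩
  have hc₁ : ContinuousOn z₁ (Icc A B) := fun t ht =>
    ((hd₁ t (hsub ht)).continuousAt).continuousWithinAt
  have hc₂ : ContinuousOn z₂ (Icc A B) := fun t ht =>
    ((hd₂ t (hsub ht)).continuousAt).continuousWithinAt
  obtain ⟨ρ, hρ, hρb⟩ := negbound hAB hc₁ hc₂ (fun t ht => ⟨hn₁ t (hsub ht), hn₂ t (hsub ht)⟩)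
  obtain ⟨Q, hQ0, hQb⟩ := qbound hq_cont hqnn
  set v : ℝ → ℝ → ℝ := fun t x => h t - c' - q (max 0 (min 1 t)) / x with hv
  have hlip : ∀ t, LipschitzOnWith (Real.toNNReal (Q/ρ^2)) (v t) (Iic (-ρ)) := by
    intro t
    exact lipdiv hρ (hqnn _ (clamp_mem t)) (hQb _ (clamp_mem t))
  have hIoo : Ioo A B ⊆ Ioo a b := fun t ht => hsub (Ioo_subset_Icc_self ht)
  have hvz : ∀ (zz : ℝ → ℝ), (∀ t ∈ Ioo a b, HasDerivAt zz (h t - c' - q t / zz t) t) →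
      ∀ t ∈ Ioo A B, HasDerivAt zz (v t (zz t)) t := by
    intro zz hd t ht
    have h01 : (0:ℝ) ≤ t ∧ t ≤ 1 := by
      have := hIoo ht
      constructor <;> [linarith [ha, this.1]; linarith [hb, this.2]]
    have := hd t (hIoo ht)
    simpa only [hv, clamp_id h01.1 h01.2] using this
  have key := ODE_solution_unique_of_mem_Icc (v := v) (s := fun _ => Iic (-ρ))
    (K := Real.toNNReal (Q/ρ^2)) (f := z₁) (g := z₂) (a := A) (b := B) (t₀ := t₀)
    (fun t _ => hlip t) ⟨lt_of_lt_of_le hAm (min_le_left _ _), lt_of_le_of_lt (le_max_left _ _) hmB⟩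
    hc₁ (hvz z₁ hd₁) (fun t ht => hρb t (Ioo_subset_Icc_self ht) |>.1)
    hc₂ (hvz z₂ hd₂) (fun t ht => hρb t (Ioo_subset_Icc_self ht) |>.2)
    heq
  exact key ⟨le_of_lt (lt_of_lt_of_le hAm (min_le_right _ _)),
    le_of_lt (lt_of_le_of_lt (le_max_right _ _) hmB)⟩


/-- strict order propagation for the same speed c' -/
lemma lt_prop {h q : ℝ → ℝ} {c' : ℝ} (hq_cont : ContinuousOn q (Icc 0 1))
    (hqnn : ∀ t ∈ Icc (0:ℝ) 1, 0 ≤ q t)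
    {z₁ z₂ : ℝ → ℝ}
    (hd₁ : ∀ t ∈ Ioo (0:ℝ) 1, HasDerivAt z₁ (h t - c' - q t / z₁ t) t)
    (hd₂ : ∀ t ∈ Ioo (0:ℝ) 1, HasDerivAt z₂ (h t - c' - q t / z₂ t) t)
    (hn₁ : ∀ t ∈ Ioo (0:ℝ) 1, z₁ t < 0) (hn₂ : ∀ t ∈ Ioo (0:ℝ) 1, z₂ t < 0)
    {t₀ : ℝ} (ht₀ : t₀ ∈ Ioo (0:ℝ) 1) (hlt : z₁ t₀ < z₂ t₀) :
    ∀ t ∈ Ioo (0:ℝ) 1, z₁ t < z₂ t := by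
  intro t ht
  by_contra hcon
  push_neg at hcon
  have key : ∃ τ ∈ Ioo (0:ℝ) 1, z₁ τ = z₂ τ := by
    rcases eq_or_lt_of_le hcon with hE | hL
    · exact ⟨t, ht, hE.symm⟩
    · -- IVT for w := z₁ - z₂ between t and t₀
      set w : ℝ → ℝ := fun s => z₁ s - z₂ s with hw
      have hsub : uIcc t t₀ ⊆ Ioo (0:ℝ) 1 := by
        intro s hs
        rcases mem_uIcc.mp hs with ⟨h1, h2⟩ | ⟨h1, h2⟩
        · exact ⟨lt_of_lt_of_le ht.1 h1, lt_of_le_of_lt h2 ht₀.2⟩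
        · exact ⟨lt_of_lt_of_le ht₀.1 h1, lt_of_le_of_lt h2 ht.2⟩
      have hwc : ContinuousOn w (uIcc t t₀) := fun s hs =>
        (((hd₁ s (hsub hs)).continuousAt).sub ((hd₂ s (hsub hs)).continuousAt)).continuousWithinAt
      have h0m : (0:ℝ) ∈ uIcc (w t) (w t₀) := by
        rw [mem_uIcc]
        right
        constructor
        · show z₁ t₀ - z₂ t₀ ≤ 0; linarith
        · show (0:ℝ) ≤ z₁ t - z₂ t; linarith
      obtain ⟨τ, hτm, hτ0⟩ := intermediate_value_uIcc hwc h0m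
      refine ⟨τ, hsub hτm, ?_⟩
      have : z₁ τ - z₂ τ = 0 := hτ0
      linarith
  obtain ⟨τ, hτ, hτeq⟩ := key
  have := eq_of_touch hq_cont hqnn (le_refl (0:ℝ)) (le_refl (1:ℝ)) hd₁ hd₂ hn₁ hn₂ hτ hτeq ht₀
  linarith

/-- cross-c comparison after/before a touching point (c₂ < c₁) -/
lemma cross_c {h q : ℝ → ℝ} {c₁ c₂ : ℝ} (hcc : c₂ < c₁)
    {z₁ z₂ : ℝ → ℝ}
    (hd₁ : ∀ t ∈ Ioo (0:ℝ) 1, HasDerivAt z₁ (h t - c₁ - q t / z₁ t) t)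
    (hd₂ : ∀ t ∈ Ioo (0:ℝ) 1, HasDerivAt z₂ (h t - c₂ - q t / z₂ t) t)
    {t₀ : ℝ} (ht₀ : t₀ ∈ Ioo (0:ℝ) 1) (heq : z₁ t₀ = z₂ t₀) :
    (∀ t ∈ Ioo (0:ℝ) 1, t₀ < t → z₁ t < z₂ t) ∧
    (∀ t ∈ Ioo (0:ℝ) 1, t < t₀ → z₂ t < z₁ t) := by
  set w : ℝ → ℝ := fun s => z₁ s - z₂ s with hwdef
  have hwc : ContinuousOn w (Ioo (0:ℝ) 1) := fun s hs =>
    (((hd₁ s hs).continuousAt).sub ((hd₂ s hs).continuousAt)).continuousWithinAt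
  have hwd : ∀ τ ∈ Ioo (0:ℝ) 1, w τ = 0 → HasDerivAt w (c₂ - c₁) τ := by
    intro τ hτ hτ0
    have h1 := (hd₁ τ hτ).sub (hd₂ τ hτ)
    have h2 : z₁ τ = z₂ τ := by simp only [hwdef] at hτ0; linarith
    have h3 : h τ - c₁ - q τ / z₁ τ - (h τ - c₂ - q τ / z₂ τ) = c₂ - c₁ := by
      rw [h2]; ring
    rwa [h3] at h1
  have hzero : ∀ s u : ℝ, s ∈ Ioo (0:ℝ) 1 → u ∈ Ioo (0:ℝ) 1 →
      ∀ τ ∈ Ico s u, w τ = 0 → ∀ᶠ t in 𝓝[>] τ, w t < 0 := by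
    intro s u hsm hum τ hτ hτ0
    have hτm : τ ∈ Ioo (0:ℝ) 1 := ⟨lt_of_lt_of_le hsm.1 hτ.1, lt_trans hτ.2 hum.2⟩
    exact (slope_signs (hwd τ hτm hτ0) hτ0 (by linarith)).1
  have hw0 : w t₀ = 0 := by simp only [hwdef]; linarith
  constructor
  · intro t ht htt
    by_contra hcon
    push_neg at hcon
    have hwt : 0 ≤ w t := by simp only [hwdef]; linarith
    -- pick s ∈ (t₀, t) with w s < 0
    have hev := (slope_signs (hwd t₀ ht₀ hw0) hw0 (by linarith)).1
    have hmem : Ioo t₀ t ∈ 𝓝[>] t₀ := Ioo_mem_nhdsGT_of_mem ⟨le_refl _, htt⟩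
    obtain ⟨s, hsw, hsm⟩ := (hev.and (eventually_of_mem hmem (fun x hx => hx))).exists
    have hsIoo : s ∈ Ioo (0:ℝ) 1 := ⟨lt_trans ht₀.1 hsm.1, lt_trans hsm.2 ht.2⟩
    rcases lt_or_eq_of_le hwt with hwt' | hwt'
    · exact noup hsm.2 (hwc.mono (fun x hx => ⟨lt_of_lt_of_le hsIoo.1 hx.1,
        lt_of_le_of_lt hx.2 ht.2⟩)) (hzero s t hsIoo ht) hsw.le hwt'
    · -- w t = 0 : use a point u just left of t where w > 0
      have hev2 := (slope_signs (hwd t ht hwt'.symm) hwt'.symm (by linarith)).2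
      have hmem2 : Ioo s t ∈ 𝓝[<] t := Ioo_mem_nhdsLT_of_mem ⟨hsm.2, le_refl _⟩
      obtain ⟨u, huw, hum⟩ := (hev2.and (eventually_of_mem hmem2 (fun x hx => hx))).exists
      have huIoo : u ∈ Ioo (0:ℝ) 1 := ⟨lt_trans hsIoo.1 hum.1, lt_trans hum.2 ht.2⟩
      exact noup hum.1 (hwc.mono (fun x hx => ⟨lt_of_lt_of_le hsIoo.1 hx.1,
        lt_of_le_of_lt hx.2 huIoo.2⟩)) (hzero s u hsIoo huIoo) hsw.le huw
  · intro t ht htt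
    by_contra hcon
    push_neg at hcon
    have hwt : w t ≤ 0 := by simp only [hwdef]; linarith
    -- pick u ∈ (t, t₀) with w u > 0
    have hev := (slope_signs (hwd t₀ ht₀ hw0) hw0 (by linarith)).2
    have hmem : Ioo t t₀ ∈ 𝓝[<] t₀ := Ioo_mem_nhdsLT_of_mem ⟨htt, le_refl _⟩
    obtain ⟨u, huw, hum⟩ := (hev.and (eventually_of_mem hmem (fun x hx => hx))).exists
    have huIoo : u ∈ Ioo (0:ℝ) 1 := ⟨lt_trans ht.1 hum.1, lt_trans hum.2 ht₀.2⟩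
    exact noup hum.1 (hwc.mono (fun x hx => ⟨lt_of_lt_of_le ht.1 hx.1,
      lt_of_le_of_lt hx.2 huIoo.2⟩)) (hzero t u ht huIoo) hwt huw


/-- a solution cannot vanish at interior α and be negative just to the right -/
lemma zright {h q : ℝ → ℝ} {c' M₁ : ℝ} (hM : ∀ t ∈ Icc (0:ℝ) 1, |h t - c'| ≤ M₁ - 1)
    (hM1 : 1 ≤ M₁) (hq_cont : ContinuousOn q (Icc 0 1))
    (hq_pos : ∀ t ∈ Ioo (0:ℝ) 1, 0 < q t)
    {z : ℝ → ℝ} (hzc : ContinuousOn z (Icc 0 1))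
    (hd : ∀ t ∈ Ioo (0:ℝ) 1, HasDerivAt z (h t - c' - q t / z t) t)
    {α β : ℝ} (hα : α ∈ Ioo (0:ℝ) 1) (hβ : β ∈ Ioo (0:ℝ) 1) (hαβ : α < β)
    (h0 : z α = 0) (hneg : ∀ t, α < t → t ≤ β → z t < 0) : False := by
  set m : ℝ := q α / 2 with hm
  have hm0 : 0 < m := by
    have := hq_pos α hα
    simp only [hm]; linarith
  have hIccN : Icc (0:ℝ) 1 ∈ 𝓝 α := Icc_mem_nhds hα.1 hα.2
  have hqα : ContinuousAt q α := hq_cont.continuousAt hIccN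
  have hzα : ContinuousAt z α := hzc.continuousAt hIccN
  have hev1 : ∀ᶠ t in 𝓝 α, m < q t := hqα.eventually_mem (Ioi_mem_nhds (by simp only [hm]; linarith [hq_pos α hα]))
  have hev2 : ∀ᶠ t in 𝓝 α, |z t| < m / (2*M₁) := by
    have : Tendsto z (𝓝 α) (𝓝 0) := by rw [← h0]; exact hzα
    have hball : Metric.ball (0:ℝ) (m/(2*M₁)) ∈ 𝓝 (0:ℝ) :=
      Metric.ball_mem_nhds _ (by positivity)
    have := this hball
    filter_upwards [this] with t ht
    simpa [Real.dist_eq] using ht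
  obtain ⟨ε, hε0, hεball⟩ := Metric.eventually_nhds_iff_ball.mp (hev1.and hev2)
  set φ : ℝ := min (α + ε/2) β with hφ
  have hφα : α < φ := by
    simp only [hφ, lt_min_iff]
    exact ⟨by linarith, hαβ⟩
  have hφβ : φ ≤ β := min_le_right _ _
  have hφε : φ - α < ε := by
    have : φ ≤ α + ε/2 := min_le_left _ _
    linarith
  have hsub : Icc α φ ⊆ Icc (0:ℝ) 1 :=
    Icc_subset_Icc hα.1.le (le_trans hφβ hβ.2.le)
  -- derivative bound on (α, φ)
  have hder : ∀ t ∈ Ioo α φ, ∃ d, HasDerivAt (fun s => z s - s) d t ∧ 0 ≤ d := by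
    intro t ht
    have htIoo : t ∈ Ioo (0:ℝ) 1 :=
      ⟨lt_trans hα.1 ht.1, lt_of_le_of_lt (le_trans ht.2.le hφβ) hβ.2⟩
    have hball : t ∈ Metric.ball α ε := by
      rw [Metric.mem_ball, Real.dist_eq, abs_of_pos (by linarith [ht.1] : (0:ℝ) < t - α)]
      linarith [ht.2]
    obtain ⟨hq1, hz1⟩ := hεball _ hball
    have hzt : z t < 0 := hneg t ht.1 (le_trans ht.2.le hφβ)
    have hzb : -z t < m/(2*M₁) := by
      rw [abs_of_neg hzt] at hz1; exact hz1
    have hqz : 2*M₁ ≤ q t / (-z t) := by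
      rw [le_div_iff₀ (by linarith : (0:ℝ) < -z t)]
      have hmm : 2*M₁*(m/(2*M₁)) = m := by field_simp
      nlinarith [mul_lt_mul_of_pos_left hzb (by linarith : (0:ℝ) < 2*M₁)]
    have hdiv : q t / z t = -(q t / (-z t)) := by
      field_simp
    have hhb := hM t (hsub (Ioo_subset_Icc_self ht))
    have habs := abs_le.mp hhb
    refine ⟨h t - c' - q t / z t - 1, ((hd t htIoo).sub (hasDerivAt_id t)), ?_⟩
    rw [hdiv]
    nlinarith
  have hmono := monoHelp (hzc.mono hsub |>.sub (continuousOn_id)) hder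
  have := hmono (left_mem_Icc.mpr hφα.le) (right_mem_Icc.mpr hφα.le) hφα.le
  simp only [Pi.sub_apply, h0, id_eq] at this
  have hzφ : z φ < 0 := hneg φ hφα hφβ
  linarith

/-- a solution cannot vanish at interior α and be negative just to the left -/
lemma zleft {h q : ℝ → ℝ} {c' M₁ : ℝ} (hM : ∀ t ∈ Icc (0:ℝ) 1, |h t - c'| ≤ M₁ - 1)
    (hM1 : 1 ≤ M₁) (hq_cont : ContinuousOn q (Icc 0 1))
    (hq_pos : ∀ t ∈ Ioo (0:ℝ) 1, 0 < q t)
    {z : ℝ → ℝ} (hzc : ContinuousOn z (Icc 0 1))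
    (hd : ∀ t ∈ Ioo (0:ℝ) 1, HasDerivAt z (h t - c' - q t / z t) t)
    {α β : ℝ} (hα : α ∈ Ioo (0:ℝ) 1) (hβ0 : 0 < β) (hβα : β < α)
    (h0 : z α = 0) (hneg : ∀ t, β ≤ t → t < α → z t < 0) : False := by
  set m : ℝ := q α / 2 with hm
  have hm0 : 0 < m := by
    have := hq_pos α hα
    simp only [hm]; linarith
  have hIccN : Icc (0:ℝ) 1 ∈ 𝓝 α := Icc_mem_nhds hα.1 hα.2
  have hqα : ContinuousAt q α := hq_cont.continuousAt hIccN
  have hev1 : ∀ᶠ t in 𝓝 α, m < q t := hqα.eventually_mem (Ioi_mem_nhds (by simp only [hm]; linarith [hq_pos α hα]))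
  -- derivative of z at α is h α - c'
  have hDα : HasDerivAt z (h α - c') α := by
    have := hd α hα
    rwa [h0, div_zero, sub_zero] at this
  have hslope := hasDerivAt_iff_tendsto_slope.mp hDα
  have hev3 : ∀ᶠ t in 𝓝[≠] α, |slope z α t| < M₁ := by
    have hball : Metric.ball (h α - c') 1 ∈ 𝓝 (h α - c') := Metric.ball_mem_nhds _ one_pos
    filter_upwards [hslope hball] with t ht
    have ht' : |slope z α t - (h α - c')| < 1 := by
      rw [mem_preimage, Metric.mem_ball, Real.dist_eq] at ht
      exact ht
    have := abs_le.mp (hM α ⟨hα.1.le, hα.2.le⟩)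
    have h1 : |slope z α t| - |h α - c'| ≤ |slope z α t - (h α - c')| :=
      abs_sub_abs_le_abs_sub _ _
    have h2 : |h α - c'| ≤ M₁ - 1 := hM α ⟨hα.1.le, hα.2.le⟩
    linarith
  have hev3' : ∀ᶠ t in 𝓝 α, t ≠ α → |slope z α t| < M₁ := by
    rwa [eventually_nhdsWithin_iff] at hev3
    
  obtain ⟨ε₁, hε₁0, hε₁ball⟩ := Metric.eventually_nhds_iff_ball.mp (hev1.and hev3')
  set ε : ℝ := min (min (ε₁/2) ((α - β)/2)) (m/(4*M₁^2)) with hε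
  have hε0 : 0 < ε := by
    simp only [hε, lt_min_iff]
    refine ⟨⟨by linarith, by linarith⟩, by positivity⟩
  set t₁ : ℝ := α - ε with ht₁
  have ht₁α : t₁ < α := by simp only [ht₁]; linarith
  have ht₁β : β < t₁ := by
    have : ε ≤ (α - β)/2 := le_trans (min_le_left _ _) (min_le_right _ _)
    simp only [ht₁]; linarith
  have hslope_bound : ∀ s, t₁ ≤ s → s < α → -z s ≤ M₁ * (α - s) := by
    intro s hs1 hs2
    have hball : s ∈ Metric.ball α ε₁ := by
      rw [Metric.mem_ball, Real.dist_eq, abs_of_neg (by linarith : s - α < 0)]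
      have : ε ≤ ε₁/2 := le_trans (min_le_left _ _) (min_le_left _ _)
      simp only [ht₁] at hs1
      linarith
    have hsl := (hε₁ball _ hball).2 (ne_of_lt hs2)
    rw [slope_def_field, h0, sub_zero] at hsl
    have h1 : (0:ℝ) < α - s := by linarith
    have hzs : z s < 0 := hneg s (le_trans ht₁β.le hs1) hs2
    rw [abs_div, abs_of_neg hzs, abs_of_neg (by linarith : s - α < 0)] at hsl
    have h6 : -(s - α) = α - s := by ring
    rw [h6] at hsl
    have := (div_lt_iff₀ h1).mp hsl
    linarith
  -- derivative bound on (t₁, α): z' ≥ 3M₁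
  have hder : ∀ t ∈ Ioo t₁ α, ∃ d, HasDerivAt (fun s => z s - 3*M₁*s) d t ∧ 0 ≤ d := by
    intro t ht
    have htIoo : t ∈ Ioo (0:ℝ) 1 := ⟨by linarith [ht.1, ht₁β, hβ0], lt_trans ht.2 hα.2⟩
    have hzt : z t < 0 := hneg t (by linarith [ht.1]) ht.2
    have hball : t ∈ Metric.ball α ε₁ := by
      rw [Metric.mem_ball, Real.dist_eq, abs_of_neg (by linarith [ht.2] : t - α < 0)]
      have h1 : ε ≤ ε₁/2 := le_trans (min_le_left _ _) (min_le_left _ _)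
      simp only [ht₁] at ht
      linarith [ht.1]
    have hq1 : m < q t := (hε₁ball _ hball).1
    have hzb : -z t ≤ M₁ * (α - t₁) := by
      calc -z t ≤ M₁ * (α - t) := hslope_bound t ht.1.le ht.2
      _ ≤ M₁ * (α - t₁) := by nlinarith [ht.1]
    have hαt₁ : α - t₁ = ε := by simp only [ht₁]; ring
    have hzb2 : -z t ≤ M₁ * ε := by rw [hαt₁] at hzb; exact hzb
    have hεm : ε ≤ m/(4*M₁^2) := min_le_right _ _
    have hqz : 4*M₁ ≤ q t / (-z t) := by
      rw [le_div_iff₀ (by linarith : (0:ℝ) < -z t)]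
      calc 4*M₁ * (-z t) ≤ 4*M₁ * (M₁ * ε) := by nlinarith
      _ ≤ 4*M₁ * (M₁ * (m/(4*M₁^2))) := by nlinarith
      _ = m := by field_simp
      _ ≤ q t := hq1.le
    have hdiv : q t / z t = -(q t / (-z t)) := by field_simp
    have hhb := abs_le.mp (hM t ⟨htIoo.1.le, htIoo.2.le⟩)
    refine ⟨h t - c' - q t / z t - 3*M₁, ?_, ?_⟩
    · have hid : HasDerivAt (fun s : ℝ => 3*M₁*s) (3*M₁) t := by
        simpa using (hasDerivAt_id t).const_mul (3*M₁)
      exact (hd t htIoo).sub hid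
    · rw [hdiv]
      nlinarith
  have hsub2 : Icc t₁ α ⊆ Icc (0:ℝ) 1 :=
    Icc_subset_Icc (by linarith) hα.2.le
  have hcont2 : ContinuousOn (fun s => z s - 3*M₁*s) (Icc t₁ α) :=
    (hzc.mono hsub2).sub ((continuousOn_id).const_smul (3*M₁))
  have hmono := monoHelp hcont2 hder
  have := hmono (left_mem_Icc.mpr ht₁α.le) (right_mem_Icc.mpr ht₁α.le) ht₁α.le
  simp only [h0] at this
  -- z t₁ ≤ 3M₁(t₁ - α) = -3M₁ ε  but also -z t₁ ≤ M₁ ε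
  have h1 : -z t₁ ≤ M₁ * (α - t₁) := hslope_bound t₁ (le_refl _) ht₁α
  have hαt₁ : α - t₁ = ε := by simp only [ht₁]; ring
  rw [hαt₁] at h1
  have h2 : z t₁ ≤ -3*M₁*ε := by
    have : z t₁ - 3*M₁*t₁ ≤ 0 - 3*M₁*α := this
    have h3 : 3*M₁*α - 3*M₁*t₁ = 3*M₁*ε := by rw [← hαt₁]; ring
    linarith
  nlinarith

/-- negativity of solutions through a negative point -/
lemma neg_sol {h q : ℝ → ℝ} {c' : ℝ} (hh_cont : ContinuousOn h (Icc 0 1))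
    (hq_cont : ContinuousOn q (Icc 0 1)) (hq_pos : ∀ t ∈ Ioo (0:ℝ) 1, 0 < q t)
    {z : ℝ → ℝ} (hzc : ContinuousOn z (Icc 0 1))
    (hd : ∀ t ∈ Ioo (0:ℝ) 1, HasDerivAt z (h t - c' - q t / z t) t)
    {t₀ : ℝ} (ht₀ : t₀ ∈ Ioo (0:ℝ) 1) (hneg : z t₀ < 0) :
    ∀ t ∈ Ioo (0:ℝ) 1, z t < 0 := by
  -- bound for |h - c'|
  obtain ⟨tm, htm, hmax⟩ := isCompact_Icc.exists_isMaxOn (f := fun t => |h t - c'|)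
    (nonempty_Icc.mpr (by norm_num)) ((hh_cont.sub continuousOn_const).abs)
  set M₁ : ℝ := |h tm - c'| + 1 with hM₁
  have hM : ∀ t ∈ Icc (0:ℝ) 1, |h t - c'| ≤ M₁ - 1 := by
    intro t ht
    have := isMaxOn_iff.mp hmax t ht
    simp only [hM₁]; linarith
  have hM1 : 1 ≤ M₁ := by
    simp only [hM₁]
    have := abs_nonneg (h tm - c')
    linarith
  intro σ hσ
  by_contra hcon
  push_neg at hcon
  rcases lt_trichotomy t₀ σ with hts | hts | hts
  · -- t₀ < σ : first zero α after t₀, z < 0 on [t₀, α)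
    set A : Set ℝ := Icc t₀ σ ∩ z ⁻¹' {0} with hA
    have hcz : ContinuousOn z (Icc t₀ σ) := hzc.mono (Icc_subset_Icc ht₀.1.le hσ.2.le)
    have hAne : A.Nonempty := by
      have hIcc : Icc (z t₀) (z σ) ⊆ z '' Icc t₀ σ := intermediate_value_Icc hts.le hcz
      obtain ⟨ρ, hρm, hρ0⟩ := hIcc ⟨hneg.le, hcon⟩
      exact ⟨ρ, hρm, by simp [hρ0]⟩
    have hAcl : IsClosed A := hcz.preimage_isClosed_of_isClosed isClosed_Icc isClosed_singleton
    have hAbdd : BddBelow A := ⟨t₀, fun x hx => hx.1.1⟩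
    set α := sInf A with hαdef
    have hαA : α ∈ A := hAcl.csInf_mem hAne hAbdd
    have hα0 : z α = 0 := hαA.2
    have hαIoo : α ∈ Ioo (0:ℝ) 1 :=
      ⟨lt_of_lt_of_le ht₀.1 hαA.1.1, lt_of_le_of_lt hαA.1.2 hσ.2⟩
    have ht₀α : t₀ < α := by
      rcases lt_or_eq_of_le hαA.1.1 with hl | hl
      · exact hl
      · exfalso; rw [← hl] at hα0; linarith
    have hnegl : ∀ t, t₀ ≤ t → t < α → z t < 0 := by
      intro t htl htr
      rcases lt_trichotomy (z t) 0 with hzt | hzt | hzt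
      · exact hzt
      · exfalso
        have htA : t ∈ A := ⟨⟨htl, le_trans htr.le hαA.1.2⟩, by simp [hzt]⟩
        have := csInf_le hAbdd htA
        linarith
      · exfalso
        -- IVT gives a zero in [t₀, t], below α
        have hIcc : Icc (z t₀) (z t) ⊆ z '' Icc t₀ t :=
          intermediate_value_Icc htl (hcz.mono (Icc_subset_Icc (le_refl _) (le_trans htr.le hαA.1.2)))
        obtain ⟨ρ, hρm, hρ0⟩ := hIcc ⟨hneg.le, hzt.le⟩
        have hρA : ρ ∈ A := ⟨⟨hρm.1, le_trans hρm.2 (le_trans htr.le hαA.1.2)⟩, by simp [hρ0]⟩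
        have := csInf_le hAbdd hρA
        have : ρ < α := lt_of_le_of_lt hρm.2 htr
        have h5 := csInf_le hAbdd hρA
        rw [← hαdef] at h5
        linarith
    exact zleft hM hM1 hq_cont hq_pos hzc hd hαIoo ht₀.1 ht₀α hα0
      (fun t h1 h2 => hnegl t h1 h2)
  · rw [hts] at hneg; linarith
  · -- σ < t₀ : last zero α before t₀, z < 0 on (α, t₀]
    set A : Set ℝ := Icc σ t₀ ∩ z ⁻¹' {0} with hA
    have hcz : ContinuousOn z (Icc σ t₀) := hzc.mono (Icc_subset_Icc hσ.1.le ht₀.2.le)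
    have hAne : A.Nonempty := by
      have hIcc : Icc (z t₀) (z σ) ⊆ z '' Icc σ t₀ := intermediate_value_Icc' hts.le hcz
      obtain ⟨ρ, hρm, hρ0⟩ := hIcc ⟨hneg.le, hcon⟩
      exact ⟨ρ, hρm, by simp [hρ0]⟩
    have hAcl : IsClosed A := hcz.preimage_isClosed_of_isClosed isClosed_Icc isClosed_singleton
    have hAbdd : BddAbove A := ⟨t₀, fun x hx => hx.1.2⟩
    set α := sSup A with hαdef
    have hαA : α ∈ A := hAcl.csSup_mem hAne hAbdd
    have hα0 : z α = 0 := hαA.2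
    have hαIoo : α ∈ Ioo (0:ℝ) 1 :=
      ⟨lt_of_lt_of_le hσ.1 hαA.1.1, lt_of_le_of_lt hαA.1.2 ht₀.2⟩
    have hαt₀ : α < t₀ := by
      rcases lt_or_eq_of_le hαA.1.2 with hl | hl
      · exact hl
      · exfalso; rw [hl] at hα0; linarith
    have hnegr : ∀ t, α < t → t ≤ t₀ → z t < 0 := by
      intro t htl htr
      rcases lt_trichotomy (z t) 0 with hzt | hzt | hzt
      · exact hzt
      · exfalso
        have htA : t ∈ A := ⟨⟨le_trans hαA.1.1 htl.le, htr⟩, by simp [hzt]⟩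
        have := le_csSup hAbdd htA
        linarith
      · exfalso
        have hIcc : Icc (z t₀) (z t) ⊆ z '' Icc t t₀ :=
          intermediate_value_Icc' htr (hcz.mono (Icc_subset_Icc (le_trans hαA.1.1 htl.le) (le_refl _)))
        obtain ⟨ρ, hρm, hρ0⟩ := hIcc ⟨hneg.le, hzt.le⟩
        have hρA : ρ ∈ A := ⟨⟨le_trans hαA.1.1 (le_trans htl.le hρm.1), hρm.2⟩, by simp [hρ0]⟩
        have h5 := le_csSup hAbdd hρA
        rw [← hαdef] at h5
        linarith [hρm.1]
    exact zright hM hM1 hq_cont hq_pos hzc hd hαIoo ht₀ hαt₀ hα0 hnegr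


/-- derivative of the difference of two same-c solutions, through the ODE -/
lemma diff_deriv_nonneg {h q : ℝ → ℝ} {c' : ℝ} (hqnn : ∀ t ∈ Icc (0:ℝ) 1, 0 ≤ q t)
    {z w : ℝ → ℝ}
    (hdz : ∀ t ∈ Ioo (0:ℝ) 1, HasDerivAt z (h t - c' - q t / z t) t)
    (hdw : ∀ t ∈ Ioo (0:ℝ) 1, HasDerivAt w (h t - c' - q t / w t) t)
    (hnz : ∀ t ∈ Ioo (0:ℝ) 1, z t < 0) (hnw : ∀ t ∈ Ioo (0:ℝ) 1, w t < 0)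
    {t : ℝ} (ht : t ∈ Ioo (0:ℝ) 1) (hle : z t ≤ w t) :
    ∃ d, HasDerivAt (fun s => w s - z s) d t ∧ 0 ≤ d := by
  refine ⟨(h t - c' - q t / w t) - (h t - c' - q t / z t), (hdw t ht).sub (hdz t ht), ?_⟩
  have hz := hnz t ht
  have hw := hnw t ht
  have hq := hqnn t ⟨ht.1.le, ht.2.le⟩
  have hzne : z t ≠ 0 := ne_of_lt hz
  have hwne : w t ≠ 0 := ne_of_lt hw
  have hid : (h t - c' - q t / w t) - (h t - c' - q t / z t) = q t * (w t - z t)/(z t * w t) := by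
    field_simp
    ring
  rw [hid]
  apply div_nonneg
  · exact mul_nonneg hq (by linarith)
  · nlinarith

/-- order and gap transfer from the right endpoint for two same-c solutions -/
lemma fam {h q : ℝ → ℝ} {c' : ℝ} (hq_cont : ContinuousOn q (Icc 0 1))
    (hqnn : ∀ t ∈ Icc (0:ℝ) 1, 0 ≤ q t)
    {z w : ℝ → ℝ} (hzc : ContinuousOn z (Icc 0 1)) (hwc : ContinuousOn w (Icc 0 1))
    (hdz : ∀ t ∈ Ioo (0:ℝ) 1, HasDerivAt z (h t - c' - q t / z t) t)
    (hdw : ∀ t ∈ Ioo (0:ℝ) 1, HasDerivAt w (h t - c' - q t / w t) t)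
    (hnz : ∀ t ∈ Ioo (0:ℝ) 1, z t < 0) (hnw : ∀ t ∈ Ioo (0:ℝ) 1, w t < 0)
    (h1 : z 1 ≤ w 1) :
    ∀ t ∈ Ioo (0:ℝ) 1, z t ≤ w t ∧ w t - z t ≤ w 1 - z 1 := by
  have hord : ∀ t ∈ Ioo (0:ℝ) 1, z t ≤ w t := by
    intro σ hσ
    by_contra hcon
    push_neg at hcon
    have hwz := lt_prop hq_cont hqnn hdw hdz hnw hnz hσ hcon
    -- u := z - w > 0 on Ioo, nondecreasing on [σ,1]
    have hu : ∀ t ∈ Ioo σ 1, ∃ d, HasDerivAt (fun s => z s - w s) d t ∧ 0 ≤ d := by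
      intro t ht
      have htI : t ∈ Ioo (0:ℝ) 1 := ⟨lt_trans hσ.1 ht.1, ht.2⟩
      exact diff_deriv_nonneg hqnn hdw hdz hnw hnz htI (hwz t htI).le
    have hcont : ContinuousOn (fun s => z s - w s) (Icc σ 1) :=
      (hzc.mono (Icc_subset_Icc hσ.1.le (le_refl _))).sub
        (hwc.mono (Icc_subset_Icc hσ.1.le (le_refl _)))
    have hmono := monoHelp hcont hu
    have := hmono (left_mem_Icc.mpr hσ.2.le) (right_mem_Icc.mpr hσ.2.le) hσ.2.le
    simp only at this
    linarith
  intro t ht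
  refine ⟨hord t ht, ?_⟩
  have hu : ∀ s ∈ Ioo t 1, ∃ d, HasDerivAt (fun r => w r - z r) d s ∧ 0 ≤ d := by
    intro s hs
    have hsI : s ∈ Ioo (0:ℝ) 1 := ⟨lt_trans ht.1 hs.1, hs.2⟩
    exact diff_deriv_nonneg hqnn hdz hdw hnz hnw hsI (hord s hsI)
  have hcont : ContinuousOn (fun r => w r - z r) (Icc t 1) :=
    (hwc.mono (Icc_subset_Icc ht.1.le (le_refl _))).sub
      (hzc.mono (Icc_subset_Icc ht.1.le (le_refl _)))
  have hmono := monoHelp hcont hu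
  have := hmono (left_mem_Icc.mpr ht.2.le) (right_mem_Icc.mpr ht.2.le) ht.2.le
  simpa using this

/-- strictness at the right endpoint for two strictly ordered same-c solutions -/
lemma strict1 {h q : ℝ → ℝ} {c' : ℝ} (hqnn : ∀ t ∈ Icc (0:ℝ) 1, 0 ≤ q t)
    {z w : ℝ → ℝ} (hzc : ContinuousOn z (Icc 0 1)) (hwc : ContinuousOn w (Icc 0 1))
    (hdz : ∀ t ∈ Ioo (0:ℝ) 1, HasDerivAt z (h t - c' - q t / z t) t)
    (hdw : ∀ t ∈ Ioo (0:ℝ) 1, HasDerivAt w (h t - c' - q t / w t) t)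
    (hnz : ∀ t ∈ Ioo (0:ℝ) 1, z t < 0) (hnw : ∀ t ∈ Ioo (0:ℝ) 1, w t < 0)
    (hlt : ∀ t ∈ Ioo (0:ℝ) 1, z t < w t) : z 1 < w 1 := by
  have hu : ∀ s ∈ Ioo (2⁻¹ : ℝ) 1, ∃ d, HasDerivAt (fun r => w r - z r) d s ∧ 0 ≤ d := by
    intro s hs
    have hsI : s ∈ Ioo (0:ℝ) 1 := ⟨lt_trans (by norm_num) hs.1, hs.2⟩
    exact diff_deriv_nonneg hqnn hdz hdw hnz hnw hsI (hlt s hsI).le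
  have hcont : ContinuousOn (fun r => w r - z r) (Icc (2⁻¹:ℝ) 1) :=
    (hwc.mono (Icc_subset_Icc (by norm_num) (le_refl _))).sub
      (hzc.mono (Icc_subset_Icc (by norm_num) (le_refl _)))
  have hmono := monoHelp hcont hu
  have h2 := hmono (left_mem_Icc.mpr (by norm_num)) (right_mem_Icc.mpr (by norm_num))
    (by norm_num)
  have h3 : z 2⁻¹ < w 2⁻¹ := hlt _ (by norm_num)
  simp only at h2
  linarith

/-- strict gap at the right endpoint for solutions with different speeds (c₂ < c₁),
given strict order after σ -/
lemma end1 {h q : ℝ → ℝ} {c₁ c₂ : ℝ} (hcc : c₂ < c₁)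
    (hqnn : ∀ t ∈ Icc (0:ℝ) 1, 0 ≤ q t)
    {z₁ z₂ : ℝ → ℝ} (hzc₁ : ContinuousOn z₁ (Icc 0 1)) (hzc₂ : ContinuousOn z₂ (Icc 0 1))
    (hd₁ : ∀ t ∈ Ioo (0:ℝ) 1, HasDerivAt z₁ (h t - c₁ - q t / z₁ t) t)
    (hd₂ : ∀ t ∈ Ioo (0:ℝ) 1, HasDerivAt z₂ (h t - c₂ - q t / z₂ t) t)
    (hn₁ : ∀ t ∈ Ioo (0:ℝ) 1, z₁ t < 0) (hn₂ : ∀ t ∈ Ioo (0:ℝ) 1, z₂ t < 0)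
    {σ : ℝ} (hσ : σ ∈ Ioo (0:ℝ) 1)
    (hlt : ∀ t ∈ Ioo (0:ℝ) 1, σ < t → z₁ t < z₂ t) : z₁ 1 < z₂ 1 := by
  set δ : ℝ := c₁ - c₂ with hδ
  have hδ0 : 0 < δ := by simp only [hδ]; linarith
  set σ' : ℝ := (σ + 1)/2 with hσ'
  have hσ'I : σ' ∈ Ioo (0:ℝ) 1 := ⟨by simp only [hσ']; linarith [hσ.1], by simp only [hσ']; linarith [hσ.2]⟩
  have hσσ' : σ < σ' := by simp only [hσ']; linarith [hσ.2]
  -- u := z₂ - z₁ - δ t is nondecreasing on [σ', 1]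
  have hu : ∀ s ∈ Ioo σ' 1, ∃ d, HasDerivAt (fun r => z₂ r - z₁ r - δ*r) d s ∧ 0 ≤ d := by
    intro s hs
    have hsI : s ∈ Ioo (0:ℝ) 1 := ⟨lt_trans hσ'I.1 hs.1, hs.2⟩
    have hlts : z₁ s < z₂ s := hlt s hsI (lt_trans hσσ' hs.1)
    have hz := hn₁ s hsI
    have hw := hn₂ s hsI
    have hq := hqnn s ⟨hsI.1.le, hsI.2.le⟩
    refine ⟨(h s - c₂ - q s / z₂ s) - (h s - c₁ - q s / z₁ s) - δ, ?_, ?_⟩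
    · have hlin : HasDerivAt (fun r : ℝ => δ*r) δ s := by
        simpa using (hasDerivAt_id s).const_mul δ
      exact ((hd₂ s hsI).sub (hd₁ s hsI)).sub hlin
    · have hzne : z₁ s ≠ 0 := ne_of_lt hz
      have hwne : z₂ s ≠ 0 := ne_of_lt hw
      have hid : (h s - c₂ - q s / z₂ s) - (h s - c₁ - q s / z₁ s) - δ
          = q s * (z₂ s - z₁ s)/(z₁ s * z₂ s) := by
        simp only [hδ]
        field_simp
        ring
      rw [hid]
      apply div_nonneg
      · exact mul_nonneg hq (by linarith)
      · nlinarith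
  have hcont : ContinuousOn (fun r => z₂ r - z₁ r - δ*r) (Icc σ' 1) :=
    ((hzc₂.mono (Icc_subset_Icc hσ'I.1.le (le_refl _))).sub
      (hzc₁.mono (Icc_subset_Icc hσ'I.1.le (le_refl _)))).sub
      (by fun_prop : ContinuousOn (fun r : ℝ => δ*r) (Icc σ' 1))
  have hmono := monoHelp hcont hu
  have h2 := hmono (left_mem_Icc.mpr hσ'I.2.le) (right_mem_Icc.mpr hσ'I.2.le) hσ'I.2.le
  have h3 : z₁ σ' < z₂ σ' := hlt σ' hσ'I hσσ'
  simp only [smul_eq_mul] at h2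
  have h4 : δ * σ' < δ * 1 := by
    apply mul_lt_mul_of_pos_left hσ'I.2 hδ0
  nlinarith

/-- endpoint equality transfer -/
lemma ext_ends {z₁ z₂ : ℝ → ℝ} (hc₁ : ContinuousOn z₁ (Icc 0 1))
    (hc₂ : ContinuousOn z₂ (Icc 0 1)) (heq : EqOn z₁ z₂ (Ioo 0 1)) :
    z₁ 0 = z₂ 0 ∧ z₁ 1 = z₂ 1 := by
  have hIoosub : Ioo (0:ℝ) 1 ⊆ Icc 0 1 := Ioo_subset_Icc_self
  have hne0 : (𝓝[Ioo (0:ℝ) 1] (0:ℝ)).NeBot := by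
    apply mem_closure_iff_nhdsWithin_neBot.mp
    rw [closure_Ioo (by norm_num : (0:ℝ) ≠ 1)]
    exact ⟨le_refl _, by norm_num⟩
  have hne1 : (𝓝[Ioo (0:ℝ) 1] (1:ℝ)).NeBot := by
    apply mem_closure_iff_nhdsWithin_neBot.mp
    rw [closure_Ioo (by norm_num : (0:ℝ) ≠ 1)]
    exact ⟨by norm_num, le_refl _⟩
  constructor
  · have t₁ : Tendsto z₁ (𝓝[Ioo (0:ℝ) 1] 0) (𝓝 (z₁ 0)) :=
      (hc₁ 0 ⟨le_refl _, by norm_num⟩).mono_left (nhdsWithin_mono _ hIoosub)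
    have t₂ : Tendsto z₂ (𝓝[Ioo (0:ℝ) 1] 0) (𝓝 (z₂ 0)) :=
      (hc₂ 0 ⟨le_refl _, by norm_num⟩).mono_left (nhdsWithin_mono _ hIoosub)
    have t₁' : Tendsto z₁ (𝓝[Ioo (0:ℝ) 1] 0) (𝓝 (z₂ 0)) := by
      apply t₂.congr'
      filter_upwards [self_mem_nhdsWithin] with x hx
      exact (heq hx).symm
    exact tendsto_nhds_unique t₁ t₁'
  · have t₁ : Tendsto z₁ (𝓝[Ioo (0:ℝ) 1] 1) (𝓝 (z₁ 1)) :=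
      (hc₁ 1 ⟨by norm_num, le_refl _⟩).mono_left (nhdsWithin_mono _ hIoosub)
    have t₂ : Tendsto z₂ (𝓝[Ioo (0:ℝ) 1] 1) (𝓝 (z₂ 1)) :=
      (hc₂ 1 ⟨by norm_num, le_refl _⟩).mono_left (nhdsWithin_mono _ hIoosub)
    have t₁' : Tendsto z₁ (𝓝[Ioo (0:ℝ) 1] 1) (𝓝 (z₂ 1)) := by
      apply t₂.congr'
      filter_upwards [self_mem_nhdsWithin] with x hx
      exact (heq hx).symm
    exact tendsto_nhds_unique t₁ t₁'


/-- existence of the auxiliary solution through (σ, zstar σ) on [a,1] -/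
lemma exist_on {h q : ℝ → ℝ} {c cstar M₁ Qm : ℝ}
    (hcc : cstar < c)
    (hh_cont : ContinuousOn h (Icc 0 1)) (hq_cont : ContinuousOn q (Icc 0 1))
    (hM : ∀ t ∈ Icc (0:ℝ) 1, |h t - c| ≤ M₁ - 1) (hM1 : 1 ≤ M₁)
    (hqnn : ∀ t ∈ Icc (0:ℝ) 1, 0 ≤ q t)
    (hQm : ∀ t ∈ Icc (0:ℝ) 1, q t ≤ Qm)
    {zβ zstar : ℝ → ℝ}
    (hzβc : ContinuousOn zβ (Icc 0 1))
    (hzβd : ∀ t ∈ Ioo (0:ℝ) 1, HasDerivAt zβ (h t - c - q t / zβ t) t)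
    (hzβn : ∀ t ∈ Ioo (0:ℝ) 1, zβ t < 0) (hzβ1 : zβ 1 < 0)
    (hzsc : ContinuousOn zstar (Icc 0 1))
    (hzsd : ∀ t ∈ Ioo (0:ℝ) 1, HasDerivAt zstar (h t - cstar - q t / zstar t) t)
    {σ : ℝ} (hσ : σ ∈ Ioo (0:ℝ) 1)
    (hord : ∀ t ∈ Ioo (0:ℝ) 1, t ≤ σ → zstar t < zβ t)
    {a : ℝ} (ha : 0 < a) (haσ : a < σ) :
    ∃ zz : ℝ → ℝ, ContinuousOn zz (Icc a 1) ∧ zz σ = zstar σ ∧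
      (∀ t ∈ Ioo a 1, HasDerivAt zz (h t - c - q t / zz t) t) ∧
      (∀ t ∈ Ioo a 1, zz t < zβ t) ∧
      (∀ t ∈ Ioo a 1, t < σ → zstar t < zz t) ∧
      (∀ t ∈ Ioo a 1, zz t < 0) := by
  have hsub : Icc a 1 ⊆ Icc (0:ℝ) 1 := Icc_subset_Icc ha.le (le_refl _)
  have hsubI : Ioo a 1 ⊆ Ioo (0:ℝ) 1 := Ioo_subset_Ioo ha.le (le_refl _)
  have hQm0 : 0 ≤ Qm := le_trans (hqnn 0 ⟨le_refl _, by norm_num⟩) (hQm 0 ⟨le_refl _, by norm_num⟩)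
  have ha1 : a ≤ 1 := le_trans haσ.le hσ.2.le
  -- upper bound -ρa for zβ on [a,1]
  obtain ⟨tsup, htsup, hmaxβ⟩ := isCompact_Icc.exists_isMaxOn (f := zβ)
    (nonempty_Icc.mpr ha1) (hzβc.mono hsub)
  set ρa : ℝ := -(zβ tsup) with hρa
  have hρa0 : 0 < ρa := by
    have hneg : zβ tsup < 0 := by
      rcases lt_or_eq_of_le htsup.2 with hl | hl
      · exact hzβn tsup ⟨lt_of_lt_of_le ha htsup.1, hl⟩
      · rw [hl]; exact hzβ1
    simp only [hρa]; linarith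
  have hρab : ∀ t ∈ Icc a 1, zβ t ≤ -ρa := by
    intro t ht
    have := isMaxOn_iff.mp hmaxβ t ht
    simp only [hρa]; linarith
  -- lower bound for zβ on [a,1]
  obtain ⟨tinfβ, htinfβ, hminβ⟩ := isCompact_Icc.exists_isMinOn (f := zβ)
    (nonempty_Icc.mpr ha1) (hzβc.mono hsub)
  -- lower bound for zstar on [a,σ]
  obtain ⟨tinfS, htinfS, hminS⟩ := isCompact_Icc.exists_isMinOn (f := zstar)
    (nonempty_Icc.mpr haσ.le) (hzsc.mono (Icc_subset_Icc ha.le hσ.2.le))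
  set K₂ : ℝ := M₁ + Qm/ρa with hK₂
  have hK₂M : M₁ ≤ K₂ := by
    simp only [hK₂]
    have : 0 ≤ Qm/ρa := div_nonneg hQm0 hρa0.le
    linarith
  set A : ℝ := min (min (zβ tinfβ) (zstar tinfS)) (zstar σ) - K₂ - 1 with hA
  have hAβ : ∀ t ∈ Icc a 1, A + 1 ≤ zβ t := by
    intro t ht
    have h1 := isMinOn_iff.mp hminβ t ht
    have h2 : min (min (zβ tinfβ) (zstar tinfS)) (zstar σ) ≤ zβ tinfβ :=
      le_trans (min_le_left _ _) (min_le_left _ _)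
    have h3 : 0 < K₂ := lt_of_lt_of_le (by linarith) hK₂M
    simp only [hA]; linarith
  have hAS : ∀ t ∈ Icc a σ, A + 1 ≤ zstar t := by
    intro t ht
    have h1 := isMinOn_iff.mp hminS t ht
    have h2 : min (min (zβ tinfβ) (zstar tinfS)) (zstar σ) ≤ zstar tinfS :=
      le_trans (min_le_left _ _) (min_le_right _ _)
    have h3 : 0 < K₂ := lt_of_lt_of_le (by linarith) hK₂M
    simp only [hA]; linarith
  have hAx₀ : A + 1 ≤ zstar σ - K₂ := by
    have h2 : min (min (zβ tinfβ) (zstar tinfS)) (zstar σ) ≤ zstar σ := min_le_right _ _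
    simp only [hA]; linarith
  have hAρ : A < -ρa := lt_of_lt_of_le (by linarith [hAβ 1 ⟨ha1, le_refl _⟩]) (hρab 1 ⟨ha1, le_refl _⟩)
  -- the truncated field
  set v : ℝ → ℝ → ℝ := fun t x => h t - c - q t / (max (min x (zβ t)) A) with hv
  have hclamp_le : ∀ t ∈ Icc a 1, ∀ x : ℝ, max (min x (zβ t)) A ≤ -ρa := by
    intro t ht x
    exact max_le (le_trans (min_le_right _ _) (hρab t ht)) hAρ.le
  have hclamp_neg : ∀ t ∈ Icc a 1, ∀ x : ℝ, max (min x (zβ t)) A < 0 := fun t ht x =>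
    lt_of_le_of_lt (hclamp_le t ht x) (by linarith)
  have hvlb : ∀ t ∈ Icc a 1, ∀ x : ℝ, -(M₁ - 1) ≤ v t x ∧ v t x ≤ K₂ - 1 := by
    intro t ht x
    have hcl := hclamp_le t ht x
    have hclneg := hclamp_neg t ht x
    have hq0 := hqnn t (hsub ht)
    have hqQ := hQm t (hsub ht)
    have habs := abs_le.mp (hM t (hsub ht))
    have hdivle : q t / (-(max (min x (zβ t)) A)) ≤ Qm/ρa :=
      div_le_div₀ hQm0 hqQ hρa0 (by linarith)
    have hdivnn : 0 ≤ q t / (-(max (min x (zβ t)) A)) :=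
      div_nonneg hq0 (by linarith)
    have hrw : q t / (max (min x (zβ t)) A) = -(q t / (-(max (min x (zβ t)) A))) := by
      rw [div_neg]
      ring
    constructor
    · simp only [hv]
      rw [hrw]
      linarith
    · simp only [hv, hK₂]
      rw [hrw]
      linarith
  -- Picard–Lindelöf
  set L : NNReal := Real.toNNReal (Qm/ρa^2) with hL
  set C : ℝ := (M₁ - 1) + Qm/ρa with hC
  have hC0 : 0 ≤ C := by
    simp only [hC]
    have : 0 ≤ Qm/ρa := div_nonneg hQm0 hρa0.le
    linarith
  have hlip : ∀ t ∈ Icc a 1, LipschitzOnWith L (v t) (Metric.closedBall (zstar σ) (C+1)) := by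
    intro t ht
    have hinner : LipschitzWith 1 (fun x : ℝ => max (min x (zβ t)) A) :=
      (LipschitzWith.id.min_const (zβ t)).max_const A
    have houter : LipschitzOnWith L (fun y : ℝ => h t - c - q t / y) (Iic (-ρa)) :=
      lipdiv hρa0 (hqnn t (hsub ht)) (hQm t (hsub ht))
    have hmaps : MapsTo (fun x : ℝ => max (min x (zβ t)) A) univ (Iic (-ρa)) :=
      fun x _ => hclamp_le t ht x
    have hcomp := houter.comp (hinner.lipschitzOnWith (s := univ)) hmaps
    rw [mul_one] at hcomp
    exact (hcomp.mono (subset_univ _))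
  have hpl : IsPicardLindelof v (tmin := a) (tmax := 1) ⟨σ, ⟨haσ.le, hσ.2.le⟩⟩ (zstar σ)
      (C+1).toNNReal 0 C.toNNReal L := by
    have hCa : (((C+1).toNNReal : NNReal) : ℝ) = C + 1 := Real.coe_toNNReal _ (by linarith)
    have hCL : ((C.toNNReal : NNReal) : ℝ) = C := Real.coe_toNNReal _ hC0
    refine ⟨by rw [hCa]; exact hlip, ?_, ?_, ?_⟩
    · intro x _
      have hD : ContinuousOn (fun t => max (min x (zβ t)) A) (Icc a 1) := fun t ht =>
        ((continuousWithinAt_const.min ((hzβc.mono hsub) t ht)).max continuousWithinAt_const)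
      exact ((hh_cont.mono hsub).sub continuousOn_const).sub
        ((hq_cont.mono hsub).div hD (fun t ht => ne_of_lt (hclamp_neg t ht x)))
    · intro t ht x _
      rw [hCL]
      obtain ⟨hlb, hrb⟩ := hvlb t ht x
      rw [Real.norm_eq_abs, abs_le]
      have h0 : (0:ℝ) ≤ Qm/ρa := div_nonneg hQm0 hρa0.le
      have hCeq : C = M₁ - 1 + Qm/ρa := hC
      have hKeq : K₂ = M₁ + Qm/ρa := hK₂
      constructor
      · calc -C ≤ -(M₁ - 1) := by rw [hCeq]; linarith
        _ ≤ v t x := hlb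
      · calc v t x ≤ K₂ - 1 := hrb
        _ ≤ C := by rw [hCeq, hKeq]; linarith
    · have hmax : max ((1:ℝ) - σ) (σ - a) ≤ 1 := by
        apply max_le <;> [linarith [hσ.1]; linarith [hσ.2, ha]]
      rw [NNReal.coe_zero, sub_zero, hCa, hCL]
      calc C * max ((1:ℝ) - σ) (σ - a) ≤ C * 1 := mul_le_mul_of_nonneg_left hmax hC0
      _ ≤ C + 1 := by linarith
  obtain ⟨zz, hzz0, hzzd⟩ := hpl.exists_eq_forall_mem_Icc_hasDerivWithinAt₀
  have hzzc : ContinuousOn zz (Icc a 1) := fun t ht => (hzzd t ht).continuousWithinAt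
  have hzzD : ∀ t ∈ Ioo a 1, HasDerivAt zz (v t (zz t)) t := fun t ht =>
    (hzzd t (Ioo_subset_Icc_self ht)).hasDerivAt (Icc_mem_nhds ht.1 ht.2)
  -- lower bound on [σ,1]
  have hg₁ : ∀ t ∈ Icc σ 1, zstar σ - M₁ ≤ zz t := by
    have hmono := monoHelp (A := σ) (B := 1) (w := fun t => zz t + M₁*t)
      ((hzzc.mono (Icc_subset_Icc haσ.le (le_refl _))).add (by fun_prop))
      ?_
    · intro t ht
      have := hmono (left_mem_Icc.mpr hσ.2.le) ht ht.1
      simp only at this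
      have h9 : M₁*σ - M₁*t ≥ -M₁ := by nlinarith [hσ.1, ht.2]
      have h8 : zz σ = zstar σ := hzz0
      nlinarith
    · intro t ht
      have htA : t ∈ Icc a 1 := ⟨le_trans haσ.le ht.1.le, ht.2.le⟩
      refine ⟨v t (zz t) + M₁, (hzzD t ⟨lt_of_lt_of_le haσ ht.1.le, ht.2⟩).add
        (by simpa using (hasDerivAt_id t).const_mul M₁), ?_⟩
      have := (hvlb t htA (zz t)).1
      linarith
  -- lower bound on [a,σ]
  have hg₂ : ∀ t ∈ Icc a σ, zstar σ - K₂ ≤ zz t := by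
    have hmono := monoHelp (A := a) (B := σ) (w := fun t => K₂*t - zz t)
      ((by fun_prop : ContinuousOn (fun t : ℝ => K₂*t) (Icc a σ)).sub
        (hzzc.mono (Icc_subset_Icc (le_refl _) hσ.2.le)))
      ?_
    · intro t ht
      have := hmono ht (right_mem_Icc.mpr haσ.le) ht.2
      simp only at this
      have h8 : zz σ = zstar σ := hzz0
      have h9 : K₂*σ - K₂*t ≤ K₂ := by nlinarith [ht.1, ha, hσ.2, lt_of_lt_of_le (by linarith : (0:ℝ) < M₁) hK₂M]
      nlinarith
    · intro t ht
      have htA : t ∈ Icc a 1 := ⟨ht.1.le, le_trans ht.2.le hσ.2.le⟩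
      refine ⟨K₂ - v t (zz t), ?_, ?_⟩
      · have h2 : HasDerivAt (fun t : ℝ => K₂*t) K₂ t := by
          simpa using (hasDerivAt_id t).const_mul K₂
        exact h2.sub (hzzD t ⟨ht.1, lt_of_lt_of_le ht.2 hσ.2.le⟩)
      · have := (hvlb t htA (zz t)).2
        linarith
  have hlow : ∀ t ∈ Icc a 1, A + 1 ≤ zz t := by
    intro t ht
    rcases le_or_gt t σ with hle | hlt
    · have := hg₂ t ⟨ht.1, hle⟩
      linarith [hAx₀]
    · have := hg₁ t ⟨hlt.le, ht.2⟩
      have h9 : zstar σ - K₂ ≤ zstar σ - M₁ := by linarith [hK₂M]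
      linarith [hAx₀]
  -- zz never equals zβ inside
  have hne : ∀ τ ∈ Ioo a 1, zz τ ≠ zβ τ := by
    intro τ hτ hEq
    classical
    set s : ℝ → Set ℝ := fun t => if t ∈ Icc a 1 then (univ : Set ℝ) else (∅ : Set ℝ) with hs
    have hvlip : ∀ t, LipschitzOnWith L (v t) (s t) := by
      intro t
      by_cases hmem : t ∈ Icc a 1
      · simp only [hs, if_pos hmem]
        have hinner : LipschitzWith 1 (fun x : ℝ => max (min x (zβ t)) A) :=
          (LipschitzWith.id.min_const (zβ t)).max_const A
        have houter : LipschitzOnWith L (fun y : ℝ => h t - c - q t / y) (Iic (-ρa)) :=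
          lipdiv hρa0 (hqnn t (hsub hmem)) (hQm t (hsub hmem))
        have hmaps : MapsTo (fun x : ℝ => max (min x (zβ t)) A) univ (Iic (-ρa)) :=
          fun x _ => hclamp_le t hmem x
        have hcomp := houter.comp (hinner.lipschitzOnWith (s := univ)) hmaps
        rw [mul_one] at hcomp
        exact hcomp
      · simp only [hs, if_neg hmem]
        intro x hx
        exact absurd hx (notMem_empty x)
    have hzβv : ∀ t ∈ Ioo a 1, HasDerivAt zβ (v t (zβ t)) t := by
      intro t ht
      have h2 : max (min (zβ t) (zβ t)) A = zβ t := by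
        rw [min_self, max_eq_left]
        linarith [hAβ t (Ioo_subset_Icc_self ht)]
      have := hzβd t (hsubI ht)
      simp only [hv, h2]
      exact this
    have hmemIcc : ∀ t ∈ Ioo a 1, (zz t ∈ s t) ∧ (zβ t ∈ s t) := by
      intro t ht
      simp only [hs, if_pos (Ioo_subset_Icc_self ht)]
      exact ⟨mem_univ _, mem_univ _⟩
    have key := ODE_solution_unique_of_mem_Icc (v := v) (s := s) (K := L)
      (fun t _ => hvlip t) hτ hzzc (fun t ht => hzzD t ht) (fun t ht => (hmemIcc t ht).1)
      (hzβc.mono hsub) hzβv (fun t ht => (hmemIcc t ht).2) hEq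
    have h3 : zz σ = zβ σ := key ⟨haσ.le, hσ.2.le⟩
    have h4 : zstar σ < zβ σ := hord σ hσ (le_refl _)
    rw [hzz0] at h3
    linarith
  -- zz < zβ on (a,1)
  have hltβ : ∀ t ∈ Ioo a 1, zz t < zβ t := by
    intro t ht
    rcases lt_or_ge (zz t) (zβ t) with hl | hl
    · exact hl
    · exfalso
      have hl' : zβ t < zz t := lt_of_le_of_ne hl (fun hEq => hne t ht hEq.symm)
      have hσI : σ ∈ Ioo a 1 := ⟨haσ, hσ.2⟩
      set w : ℝ → ℝ := fun r => zz r - zβ r with hw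
      have hsubu : uIcc t σ ⊆ Ioo a 1 := by
        intro r hr
        rcases mem_uIcc.mp hr with ⟨h1, h2⟩ | ⟨h1, h2⟩
        · exact ⟨lt_of_lt_of_le ht.1 h1, lt_of_le_of_lt h2 hσI.2⟩
        · exact ⟨lt_of_lt_of_le hσI.1 h1, lt_of_le_of_lt h2 ht.2⟩
      have hwc : ContinuousOn w (uIcc t σ) := by
        apply ContinuousOn.sub
        · exact hzzc.mono (fun r hr => Ioo_subset_Icc_self (hsubu hr))
        · exact (hzβc.mono hsub).mono (fun r hr => Ioo_subset_Icc_self (hsubu hr))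
      have h0m : (0:ℝ) ∈ uIcc (w t) (w σ) := by
        rw [mem_uIcc]
        right
        have h5 : zstar σ < zβ σ := hord σ hσ (le_refl _)
        constructor
        · show zz σ - zβ σ ≤ 0
          rw [hzz0]; linarith
        · show (0:ℝ) ≤ zz t - zβ t; linarith
      obtain ⟨τ, hτm, hτ0⟩ := intermediate_value_uIcc hwc h0m
      have : zz τ = zβ τ := by
        have : zz τ - zβ τ = 0 := hτ0
        linarith
      exact hne τ (hsubu hτm) this
  -- real ODE for zz
  have hreal : ∀ t ∈ Ioo a 1, HasDerivAt zz (h t - c - q t / zz t) t := by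
    intro t ht
    have h1 := hzzD t ht
    have h2 : max (min (zz t) (zβ t)) A = zz t := by
      rw [min_eq_left (hltβ t ht).le, max_eq_left]
      linarith [hlow t (Ioo_subset_Icc_self ht)]
    simp only [hv, h2] at h1
    exact h1
  have hnegz : ∀ t ∈ Ioo a 1, zz t < 0 := fun t ht =>
    lt_trans (hltβ t ht) (hzβn t (hsubI ht))
  -- zstar < zz to the left of σ
  have hltS : ∀ t ∈ Ioo a 1, t < σ → zstar t < zz t := by
    set w : ℝ → ℝ := fun r => zz r - zstar r with hw
    have hw0 : w σ = 0 := by simp only [hw, hzz0, sub_self]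
    have hwd : ∀ τ ∈ Ioo a 1, w τ = 0 → HasDerivAt w (cstar - c) τ := by
      intro τ hτ hτ0
      have h1 := (hreal τ hτ).sub (hzsd τ (hsubI hτ))
      have h2 : zz τ = zstar τ := by simp only [hw] at hτ0; linarith
      have h3 : h τ - c - q τ / zz τ - (h τ - cstar - q τ / zstar τ) = cstar - c := by
        rw [h2]; ring
      rwa [h3] at h1
    have hwc : ContinuousOn w (Icc a 1) := hzzc.sub (hzsc.mono hsub)
    intro t ht htσ
    by_contra hcon
    push_neg at hcon
    have hwt : w t ≤ 0 := by simp only [hw]; linarith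
    have hσI : σ ∈ Ioo a 1 := ⟨haσ, hσ.2⟩
    have hev := (slope_signs (hwd σ hσI hw0) hw0 (by linarith)).2
    have hmem : Ioo t σ ∈ 𝓝[<] σ := Ioo_mem_nhdsLT_of_mem ⟨htσ, le_refl _⟩
    obtain ⟨u, huw, hum⟩ := (hev.and (eventually_of_mem hmem (fun x hx => hx))).exists
    have huI : u ∈ Ioo a 1 := ⟨lt_trans ht.1 hum.1, lt_trans hum.2 hσI.2⟩
    have hzero : ∀ τ ∈ Ico t u, w τ = 0 → ∀ᶠ r in 𝓝[>] τ, w r < 0 := by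
      intro τ hτ hτ0
      have hτI : τ ∈ Ioo a 1 := ⟨lt_of_lt_of_le ht.1 hτ.1, lt_trans hτ.2 huI.2⟩
      exact (slope_signs (hwd τ hτI hτ0) hτ0 (by linarith)).1
    exact noup hum.1 (hwc.mono (Icc_subset_Icc ht.1.le huI.2.le)) hzero hwt huw
  exact ⟨zz, hzzc, hzz0, hreal, hltβ, hltS, hnegz⟩


set_option maxHeartbeats 1000000 in
/-- the key comparison: zβ ≤ zstar on (0,1) -/
lemma zb_le_zs {h q : ℝ → ℝ} {c cstar βc : ℝ} {zstar zβ : ℝ → ℝ}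
    (hh_cont : ContinuousOn h (Icc 0 1)) (hq_cont : ContinuousOn q (Icc 0 1))
    (hqnn : ∀ t ∈ Icc (0:ℝ) 1, 0 ≤ q t)
    (hzsc : ContinuousOn zstar (Icc 0 1))
    (hzsd : ∀ t ∈ Ioo (0:ℝ) 1, HasDerivAt zstar (h t - cstar - q t / zstar t) t)
    (hzβc : ContinuousOn zβ (Icc 0 1))
    (hzβd : ∀ t ∈ Ioo (0:ℝ) 1, HasDerivAt zβ (h t - c - q t / zβ t) t)
    (hzβn : ∀ t ∈ Ioo (0:ℝ) 1, zβ t < 0)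
    (hzβ0 : zβ 0 = 0) (hzβ1 : zβ 1 = βc)
    (hzs0 : zstar 0 = 0)
    (hc : cstar < c) (hβneg : βc < 0)
    (hβ : ∀ b : ℝ, b < 0 → ((∃ z : ℝ → ℝ, PC h q c z ∧ z 1 = b) ↔ βc ≤ b)) :
    ∀ t ∈ Ioo (0:ℝ) 1, zβ t ≤ zstar t := by
  intro σ hσ
  by_contra hcon
  push_neg at hcon
  -- w := zβ - zstar is positive on (0, σ]
  have hord : ∀ t ∈ Ioo (0:ℝ) 1, t ≤ σ → zstar t < zβ t := by
    intro t ht htσ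
    rcases eq_or_lt_of_le htσ with hE | hL
    · rw [hE]; exact hcon
    · by_contra hcon2
      push_neg at hcon2
      set w : ℝ → ℝ := fun s => zβ s - zstar s with hw
      have hwc : ContinuousOn w (Icc t σ) := by
        apply ContinuousOn.sub
        · exact hzβc.mono (Icc_subset_Icc ht.1.le hσ.2.le)
        · exact hzsc.mono (Icc_subset_Icc ht.1.le hσ.2.le)
      have hzero : ∀ τ ∈ Ico t σ, w τ = 0 → ∀ᶠ r in 𝓝[>] τ, w r < 0 := by
        intro τ hτ hτ0
        have hτI : τ ∈ Ioo (0:ℝ) 1 := ⟨lt_of_lt_of_le ht.1 hτ.1, lt_trans hτ.2 hσ.2⟩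
        have heq : zβ τ = zstar τ := by simp only [hw] at hτ0; linarith
        have h1 := (hzβd τ hτI).sub (hzsd τ hτI)
        have h3 : h τ - c - q τ / zβ τ - (h τ - cstar - q τ / zstar τ) = cstar - c := by
          rw [heq]; ring
        rw [h3] at h1
        exact (slope_signs h1 hτ0 (by linarith)).1
      have hwt : w t ≤ 0 := by simp only [hw]; linarith
      have hwσ : 0 < w σ := by simp only [hw]; linarith
      exact noup hL hwc hzero hwt hwσ
  -- constants
  obtain ⟨tm, htm, hmax⟩ := isCompact_Icc.exists_isMaxOn (f := fun t => |h t - c|)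
    (nonempty_Icc.mpr (by norm_num)) ((hh_cont.sub continuousOn_const).abs)
  set M₁ : ℝ := |h tm - c| + 1 with hM₁
  have hM : ∀ t ∈ Icc (0:ℝ) 1, |h t - c| ≤ M₁ - 1 := by
    intro t ht
    have := isMaxOn_iff.mp hmax t ht
    simp only [hM₁]; linarith
  have hM1 : 1 ≤ M₁ := by
    simp only [hM₁]; have := abs_nonneg (h tm - c); linarith
  obtain ⟨Qm, hQm0, hQm⟩ := qbound hq_cont hqnn
  have hzβ1' : zβ 1 < 0 := by rw [hzβ1]; exact hβneg
  -- family of solutions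
  have H : ∀ a : ℝ, ∃ zz : ℝ → ℝ, (0 < a ∧ a < σ) →
      (ContinuousOn zz (Icc a 1) ∧ zz σ = zstar σ ∧
      (∀ t ∈ Ioo a 1, HasDerivAt zz (h t - c - q t / zz t) t) ∧
      (∀ t ∈ Ioo a 1, zz t < zβ t) ∧
      (∀ t ∈ Ioo a 1, t < σ → zstar t < zz t) ∧
      (∀ t ∈ Ioo a 1, zz t < 0)) := by
    intro a
    by_cases ha : 0 < a ∧ a < σ
    · obtain ⟨zz, hp⟩ := exist_on hc hh_cont hq_cont hM hM1 hqnn hQm hzβc hzβd hzβn hzβ1'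
        hzsc hzsd hσ hord ha.1 ha.2
      exact ⟨zz, fun _ => hp⟩
    · exact ⟨fun _ => 0, fun hcon' => absurd hcon' ha⟩
  choose Z hZ using H
  -- coherence
  have hco : ∀ a a' : ℝ, (0 < a ∧ a < σ) → (0 < a' ∧ a' < σ) →
      ∀ t ∈ Ioo (max a a') 1, Z a t = Z a' t := by
    intro a a' ha ha' t ht
    obtain ⟨_, hZ0, hZd, _, _, hZn⟩ := hZ a ha
    obtain ⟨_, hZ0', hZd', _, _, hZn'⟩ := hZ a' ha'
    have hsub1 : Ioo (max a a') 1 ⊆ Ioo a 1 := Ioo_subset_Ioo (le_max_left _ _) (le_refl _)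
    have hsub2 : Ioo (max a a') 1 ⊆ Ioo a' 1 := Ioo_subset_Ioo (le_max_right _ _) (le_refl _)
    have hσm : σ ∈ Ioo (max a a') 1 := ⟨max_lt ha.2 ha'.2, hσ.2⟩
    exact eq_of_touch hq_cont hqnn (le_of_lt (lt_of_lt_of_le ha.1 (le_max_left _ _))) (le_refl 1)
      (fun s hs => hZd s (hsub1 hs)) (fun s hs => hZd' s (hsub2 hs))
      (fun s hs => hZn s (hsub1 hs)) (fun s hs => hZn' s (hsub2 hs))
      hσm (by rw [hZ0, hZ0']) ht
  set Zf : ℝ → ℝ := fun t => if 0 < t then Z ((min t σ)/2) t else 0 with hZf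
  have hIdx : ∀ t : ℝ, 0 < t → (0 < (min t σ)/2 ∧ (min t σ)/2 < σ) := by
    intro t ht
    constructor
    · have : 0 < min t σ := lt_min ht hσ.1
      linarith
    · have h1 : min t σ ≤ σ := min_le_right _ _
      linarith [hσ.1]
  have hkey : ∀ a : ℝ, (0 < a ∧ a < σ) → ∀ t ∈ Ioo a 1, Zf t = Z a t := by
    intro a ha t ht
    have ht0 : 0 < t := lt_trans ha.1 ht.1
    have hidx := hIdx t ht0
    have hlt : (min t σ)/2 < t := by
      have : min t σ ≤ t := min_le_left _ _
      linarith
    simp only [hZf, if_pos ht0]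
    exact hco _ a hidx ha t ⟨max_lt hlt ht.1, ht.2⟩
  -- Zf is a PC solution with Zf 1 < βc
  have hZfd : ∀ t ∈ Ioo (0:ℝ) 1, HasDerivAt Zf (h t - c - q t / Zf t) t := by
    intro t ht
    set a : ℝ := (min t σ)/4 with haa
    have ha : 0 < a ∧ a < σ := by
      have h1 : 0 < min t σ := lt_min ht.1 hσ.1
      have h2 : min t σ ≤ σ := min_le_right _ _
      constructor
      · simp only [haa]; linarith
      · simp only [haa]; linarith [hσ.1]
    have hta : a < t := by
      have : min t σ ≤ t := min_le_left _ _
      simp only [haa]; linarith [lt_min ht.1 hσ.1]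
    have htI : t ∈ Ioo a 1 := ⟨hta, ht.2⟩
    obtain ⟨_, _, hZd, _, _, _⟩ := hZ a ha
    have hev : Zf =ᶠ[𝓝 t] Z a := by
      filter_upwards [isOpen_Ioo.mem_nhds htI] with s hs
      exact hkey a ha s hs
    have hD := (hZd t htI).congr_of_eventuallyEq hev
    rwa [← hkey a ha t htI] at hD
  have hZfn : ∀ t ∈ Ioo (0:ℝ) 1, Zf t < 0 := by
    intro t ht
    set a : ℝ := (min t σ)/4 with haa
    have ha : 0 < a ∧ a < σ := by
      have h1 : 0 < min t σ := lt_min ht.1 hσ.1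
      have h2 : min t σ ≤ σ := min_le_right _ _
      exact ⟨by simp only [haa]; linarith, by simp only [haa]; linarith [hσ.1]⟩
    have hta : a < t := by
      have : min t σ ≤ t := min_le_left _ _
      simp only [haa]; linarith [lt_min ht.1 hσ.1]
    obtain ⟨_, _, _, _, _, hZn⟩ := hZ a ha
    rw [hkey a ha t ⟨hta, ht.2⟩]
    exact hZn t ⟨hta, ht.2⟩
  have hZfβ : ∀ t ∈ Ioo (0:ℝ) 1, Zf t < zβ t := by
    intro t ht
    set a : ℝ := (min t σ)/4 with haa
    have ha : 0 < a ∧ a < σ := by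
      have h1 : 0 < min t σ := lt_min ht.1 hσ.1
      have h2 : min t σ ≤ σ := min_le_right _ _
      exact ⟨by simp only [haa]; linarith, by simp only [haa]; linarith [hσ.1]⟩
    have hta : a < t := by
      have : min t σ ≤ t := min_le_left _ _
      simp only [haa]; linarith [lt_min ht.1 hσ.1]
    obtain ⟨_, _, _, hZβ, _, _⟩ := hZ a ha
    rw [hkey a ha t ⟨hta, ht.2⟩]
    exact hZβ t ⟨hta, ht.2⟩
  have hZfS : ∀ t ∈ Ioo (0:ℝ) 1, t < σ → zstar t < Zf t := by
    intro t ht htσ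
    set a : ℝ := (min t σ)/4 with haa
    have ha : 0 < a ∧ a < σ := by
      have h1 : 0 < min t σ := lt_min ht.1 hσ.1
      have h2 : min t σ ≤ σ := min_le_right _ _
      exact ⟨by simp only [haa]; linarith, by simp only [haa]; linarith [hσ.1]⟩
    have hta : a < t := by
      have : min t σ ≤ t := min_le_left _ _
      simp only [haa]; linarith [lt_min ht.1 hσ.1]
    obtain ⟨_, _, _, _, hZS, _⟩ := hZ a ha
    rw [hkey a ha t ⟨hta, ht.2⟩]
    exact hZS t ⟨hta, ht.2⟩ htσ
  have hZf0 : Zf 0 = 0 := by simp only [hZf, if_neg (lt_irrefl (0:ℝ))]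
  -- continuity of Zf on [0,1]
  have hZfc : ContinuousOn Zf (Icc 0 1) := by
    intro t ht
    rcases eq_or_lt_of_le ht.1 with h0 | h0
    · -- t = 0 : squeeze
      rw [← h0]
      have hsq : Tendsto Zf (𝓝[Icc 0 1] 0) (𝓝 0) := by
        have hbound : ∀ᶠ s in 𝓝[Icc (0:ℝ) 1] (0:ℝ), ‖Zf s‖ ≤ -zstar s := by
          have hmem : Icc (0:ℝ) 1 ∩ Iio σ ∈ 𝓝[Icc (0:ℝ) 1] (0:ℝ) :=
            inter_mem self_mem_nhdsWithin (eventually_nhdsWithin_of_eventually_nhds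
              (Iio_mem_nhds hσ.1))
          filter_upwards [hmem] with s hs
          rcases eq_or_lt_of_le hs.1.1 with hs0 | hs0
          · rw [← hs0]
            simp [hZf0, hzs0]
          · have hsI : s ∈ Ioo (0:ℝ) 1 := ⟨hs0, lt_trans hs.2 hσ.2⟩
            have h1 := hZfS s hsI hs.2
            have h2 := hZfn s hsI
            rw [Real.norm_eq_abs, abs_of_neg h2]
            linarith
        have hg : Tendsto (fun s => -zstar s) (𝓝[Icc (0:ℝ) 1] (0:ℝ)) (𝓝 0) := by
          have h2 : ContinuousWithinAt zstar (Icc (0:ℝ) 1) 0 := hzsc 0 ⟨le_refl _, by norm_num⟩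
          rw [ContinuousWithinAt, hzs0] at h2
          simpa using h2.neg
        exact squeeze_zero_norm' hbound hg
      rw [ContinuousWithinAt, hZf0]
      exact hsq
    · rcases eq_or_lt_of_le ht.2 with h1 | h1
      · -- t = 1
        subst h1
        set a : ℝ := σ/2 with haa
        have ha : 0 < a ∧ a < σ := ⟨by simp only [haa]; linarith [hσ.1],
          by simp only [haa]; linarith [hσ.1]⟩
        obtain ⟨hZc, _, _, _, _, _⟩ := hZ a ha
        have heq1 : Zf 1 = Z a 1 := by
          simp only [hZf, if_pos (by norm_num : (0:ℝ) < 1)]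
          rw [min_eq_right hσ.2.le]
        have hZa : ContinuousWithinAt (Z a) (Icc (0:ℝ) 1 ∩ Ioi a) 1 := by
          apply (hZc 1 ⟨le_of_lt (lt_trans ha.2 hσ.2), le_refl _⟩).mono
          intro s hs
          exact ⟨hs.2.le, hs.1.2⟩
        have hZfa : ContinuousWithinAt Zf (Icc (0:ℝ) 1 ∩ Ioi a) 1 := by
          apply hZa.congr
          · intro s hs
            rcases eq_or_lt_of_le hs.1.2 with hs1 | hs1
            · rw [hs1]; exact heq1
            · exact hkey a ha s ⟨hs.2, hs1⟩
          · exact heq1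
        rw [← continuousWithinAt_inter (isOpen_Ioi.mem_nhds (lt_trans ha.2 hσ.2))]
        exact hZfa
      · exact ((hZfd t ⟨h0, h1⟩).continuousAt).continuousWithinAt
  -- conclude : Zf 1 < βc, contradiction with minimality
  have hstrict := strict1 hqnn hZfc hzβc hZfd hzβd hZfn hzβn hZfβ
  rw [hzβ1] at hstrict
  have hZf1neg : Zf 1 < 0 := by linarith
  have := (hβ (Zf 1) hZf1neg).mp ⟨Zf, ⟨⟨hZfc, hZfd, hZfn⟩, hZf0⟩, rfl⟩
  linarith


/-- comparison of the two PC00 solutions : zstar < z₀ inside (0,1) -/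
lemma pc00cmp {h q : ℝ → ℝ} {c cstar : ℝ} (hc : cstar < c)
    (hqnn : ∀ t ∈ Icc (0:ℝ) 1, 0 ≤ q t)
    {z₀ zstar : ℝ → ℝ}
    (hz₀c : ContinuousOn z₀ (Icc 0 1)) (hzsc : ContinuousOn zstar (Icc 0 1))
    (hz₀d : ∀ t ∈ Ioo (0:ℝ) 1, HasDerivAt z₀ (h t - c - q t / z₀ t) t)
    (hzsd : ∀ t ∈ Ioo (0:ℝ) 1, HasDerivAt zstar (h t - cstar - q t / zstar t) t)
    (hz₀n : ∀ t ∈ Ioo (0:ℝ) 1, z₀ t < 0) (hzsn : ∀ t ∈ Ioo (0:ℝ) 1, zstar t < 0)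
    (hz₀1 : z₀ 1 = 0) (hzs1 : zstar 1 = 0) :
    ∀ t ∈ Ioo (0:ℝ) 1, zstar t < z₀ t := by
  intro σ hσ
  by_contra hcon
  push_neg at hcon
  set w : ℝ → ℝ := fun s => z₀ s - zstar s with hw
  set δ : ℝ := c - cstar with hδ
  have hδ0 : 0 < δ := by simp only [hδ]; linarith
  have hwσ : w σ ≤ 0 := by simp only [hw]; linarith
  have hwc : ContinuousOn w (Icc 0 1) := hz₀c.sub hzsc
  have hwd0 : ∀ τ ∈ Ioo (0:ℝ) 1, w τ = 0 → HasDerivAt w (-δ) τ := by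
    intro τ hτ hτ0
    have heq : z₀ τ = zstar τ := by simp only [hw] at hτ0; linarith
    have h1 := (hz₀d τ hτ).sub (hzsd τ hτ)
    have h3 : h τ - c - q τ / z₀ τ - (h τ - cstar - q τ / zstar τ) = -δ := by
      rw [heq]; simp only [hδ]; ring
    rwa [h3] at h1
  -- step (a) : w ≤ 0 on [σ, 1)
  have ha : ∀ t ∈ Ico σ 1, w t ≤ 0 := by
    intro t ht
    by_contra hcont
    push_neg at hcont
    have htσ : σ < t := by
      rcases lt_or_eq_of_le ht.1 with hl | hl
      · exact hl
      · exfalso; rw [← hl] at hcont; linarith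
    have htI : t ∈ Ioo (0:ℝ) 1 := ⟨lt_trans hσ.1 htσ, ht.2⟩
    have hzero : ∀ τ ∈ Ico σ t, w τ = 0 → ∀ᶠ r in 𝓝[>] τ, w r < 0 := by
      intro τ hτ hτ0
      have hτI : τ ∈ Ioo (0:ℝ) 1 := ⟨lt_of_lt_of_le hσ.1 hτ.1, lt_trans hτ.2 htI.2⟩
      exact (slope_signs (hwd0 τ hτI hτ0) hτ0 (by linarith)).1
    exact noup htσ (hwc.mono (Icc_subset_Icc hσ.1.le htI.2.le)) hzero hwσ hcont
  -- step (b) : w + δ t is nonincreasing on [σ, 1]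
  have hb : MonotoneOn (fun t => -(w t + δ*t)) (Icc σ 1) := by
    apply monoHelp
    · apply ContinuousOn.neg
      exact (hwc.mono (Icc_subset_Icc hσ.1.le (le_refl _))).add (by fun_prop)
    · intro t ht
      have htI : t ∈ Ioo (0:ℝ) 1 := ⟨lt_trans hσ.1 ht.1, ht.2⟩
      have hwt : w t ≤ 0 := ha t ⟨ht.1.le, ht.2⟩
      refine ⟨-((h t - c - q t / z₀ t - (h t - cstar - q t / zstar t)) + δ), ?_, ?_⟩
      · apply HasDerivAt.neg
        apply HasDerivAt.add ((hz₀d t htI).sub (hzsd t htI))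
        simpa using (hasDerivAt_id t).const_mul δ
      · have hz := hz₀n t htI
        have hzs := hzsn t htI
        have hzne : z₀ t ≠ 0 := ne_of_lt hz
        have hzsne : zstar t ≠ 0 := ne_of_lt hzs
        have hid : (h t - c - q t / z₀ t - (h t - cstar - q t / zstar t)) + δ
            = q t * (z₀ t - zstar t) / (zstar t * z₀ t) := by
          simp only [hδ]
          field_simp
          ring
        rw [hid]
        have hnum : q t * (z₀ t - zstar t) ≤ 0 := by
          apply mul_nonpos_of_nonneg_of_nonpos (hqnn t ⟨htI.1.le, htI.2.le⟩)
          simp only [hw] at hwt; linarith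
        have hden : 0 < zstar t * z₀ t := mul_pos_of_neg_of_neg hzs hz
        have := div_nonpos_of_nonpos_of_nonneg hnum hden.le
        linarith
  -- step (c) : contradiction at t = 1
  have h2 := hb (left_mem_Icc.mpr hσ.2.le) (right_mem_Icc.mpr hσ.2.le) hσ.2.le
  simp only at h2
  have hw1 : w 1 = 0 := by simp only [hw, hz₀1, hzs1]; ring
  rw [hw1] at h2
  have h3 : δ*σ < δ*1 := mul_lt_mul_of_pos_left hσ.2 hδ0
  linarith

end S17

open S17 in
set_option maxHeartbeats 1600000 in
/-- existence, uniqueness and properties of the solutions ẑ_{φ₀},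
and their monotonicity in φ₀. -/
theorem stmt_17 (f h q : ℝ → ℝ) (cstar c βc : ℝ) (zstar zβ : ℝ → ℝ)
    (hq_cont : ContinuousOn q (Icc 0 1))
    (hq_pos : ∀ φ ∈ Ioo (0:ℝ) 1, 0 < q φ)
    (hq0 : q 0 = 0) (hq1 : q 1 = 0)
    (hq_lim : ∃ L : ℝ, ∀ᶠ φ in 𝓝[>] (0:ℝ), q φ / φ ≤ L)
    (hf0 : f 0 = 0)
    (hf' : ∀ x ∈ Icc (0:ℝ) 1, HasDerivWithinAt f (h x) (Icc 0 1) x)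
    (hh_cont : ContinuousOn h (Icc 0 1))
    (hcstar : ∀ c' : ℝ, (∃ z : ℝ → ℝ, PC00 h q c' z) ↔ cstar ≤ c')
    (hzstar : PC00 h q cstar zstar)
    (hc : cstar < c)
    (hβneg : βc < 0)
    (hβ : ∀ b : ℝ, b < 0 → ((∃ z : ℝ → ℝ, PC h q c z ∧ z 1 = b) ↔ βc ≤ b))
    (hzβ : PC h q c zβ ∧ zβ 1 = βc) :
    (∀ φ₀ ∈ Ioo (0:ℝ) 1,
      (∃ zhat : ℝ → ℝ, HatSol h q c φ₀ zstar zhat ∧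
        zhat 0 = 0 ∧
        (∀ φ ∈ Ioc φ₀ 1, zhat φ < zstar φ) ∧
        (∀ φ ∈ Ioc (0:ℝ) 1, zβ φ ≤ zhat φ)) ∧
      (∀ z₁ z₂ : ℝ → ℝ, HatSol h q c φ₀ zstar z₁ → HatSol h q c φ₀ zstar z₂ →
        EqOn z₁ z₂ (Icc 0 1))) ∧
    (∀ φ₁ φ₀ : ℝ, φ₁ ∈ Ioo (0:ℝ) 1 → φ₀ ∈ Ioo (0:ℝ) 1 → φ₁ < φ₀ →
      ∀ z₁ z₀ : ℝ → ℝ, HatSol h q c φ₁ zstar z₁ → HatSol h q c φ₀ zstar z₀ →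
        ∀ φ ∈ Ioc (0:ℝ) 1, z₁ φ < z₀ φ) := by
  obtain ⟨⟨⟨hzsc, hzsd, hzsn⟩, hzs0⟩, hzs1⟩ := hzstar
  obtain ⟨⟨⟨hzβc, hzβd, hzβn⟩, hzβ0⟩, hzβ1⟩ := hzβ
  have hqnn : ∀ t ∈ Icc (0:ℝ) 1, 0 ≤ q t := by
    intro t ht
    rcases eq_or_lt_of_le ht.1 with h0 | h0
    · rw [← h0, hq0]
    · rcases eq_or_lt_of_le ht.2 with h1 | h1
      · rw [h1, hq1]
      · exact (hq_pos t ⟨h0, h1⟩).le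
  obtain ⟨z₀, ⟨⟨⟨hz₀c, hz₀d, hz₀n⟩, hz₀0⟩, hz₀1⟩⟩ := (hcstar c).mpr hc.le
  have hKL : ∀ t ∈ Ioo (0:ℝ) 1, zβ t ≤ zstar t :=
    zb_le_zs hh_cont hq_cont hqnn hzsc hzsd hzβc hzβd hzβn hzβ0 hzβ1 hzs0 hc hβneg hβ
  have hcmp0 : ∀ t ∈ Ioo (0:ℝ) 1, zstar t < z₀ t :=
    pc00cmp hc hqnn hz₀c hzsc hz₀d hzsd hz₀n hzsn hz₀1 hzs1
  -- the family of PC solutions indexed by the boundary value b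
  have hZbE : ∀ b : ℝ, ∃ z : ℝ → ℝ, (βc ≤ b ∧ b < 0) → (PC h q c z ∧ z 1 = b) := by
    intro b
    by_cases hb : βc ≤ b ∧ b < 0
    · obtain ⟨z, hz⟩ := (hβ b hb.2).mpr hb.1
      exact ⟨z, fun _ => hz⟩
    · exact ⟨0, fun hcon => absurd hcon hb⟩
  choose Zb hZb using hZbE
  have hZc : ∀ b, βc ≤ b → b < 0 → ContinuousOn (Zb b) (Icc 0 1) :=
    fun b h1 h2 => (hZb b ⟨h1, h2⟩).1.1.1
  have hZd : ∀ b, βc ≤ b → b < 0 →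
      ∀ t ∈ Ioo (0:ℝ) 1, HasDerivAt (Zb b) (h t - c - q t / Zb b t) t :=
    fun b h1 h2 => (hZb b ⟨h1, h2⟩).1.1.2.1
  have hZn : ∀ b, βc ≤ b → b < 0 → ∀ t ∈ Ioo (0:ℝ) 1, Zb b t < 0 :=
    fun b h1 h2 => (hZb b ⟨h1, h2⟩).1.1.2.2
  have hZ0v : ∀ b, βc ≤ b → b < 0 → Zb b 0 = 0 :=
    fun b h1 h2 => (hZb b ⟨h1, h2⟩).1.2
  have hZ1v : ∀ b, βc ≤ b → b < 0 → Zb b 1 = b :=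
    fun b h1 h2 => (hZb b ⟨h1, h2⟩).2
  have famZ : ∀ b b', βc ≤ b → b < 0 → βc ≤ b' → b' < 0 → b ≤ b' →
      ∀ t ∈ Ioo (0:ℝ) 1, Zb b t ≤ Zb b' t ∧ Zb b' t - Zb b t ≤ b' - b := by
    intro b b' h1 h2 h1' h2' hbb t ht
    have := fam hq_cont hqnn (hZc b h1 h2) (hZc b' h1' h2') (hZd b h1 h2) (hZd b' h1' h2')
      (hZn b h1 h2) (hZn b' h1' h2')
      (by rw [hZ1v b h1 h2, hZ1v b' h1' h2']; exact hbb) t ht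
    rwa [hZ1v b h1 h2, hZ1v b' h1' h2'] at this
  have hβeqv : ∀ t ∈ Ioo (0:ℝ) 1, Zb βc t = zβ t := by
    intro t ht
    have h1 := fam hq_cont hqnn (hZc βc (le_refl _) hβneg) hzβc (hZd βc (le_refl _) hβneg)
      hzβd (hZn βc (le_refl _) hβneg) hzβn
      (by rw [hZ1v βc (le_refl _) hβneg, hzβ1]) t ht
    have h2 := fam hq_cont hqnn hzβc (hZc βc (le_refl _) hβneg) hzβd
      (hZd βc (le_refl _) hβneg) hzβn (hZn βc (le_refl _) hβneg)
      (by rw [hZ1v βc (le_refl _) hβneg, hzβ1]) t ht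
    linarith [h1.1, h2.1]
  constructor
  · -- the φ₀-part
    intro φ₀ hφ₀
    set y : ℝ := zstar φ₀ with hy'
    have hy : y < 0 := hzsn φ₀ hφ₀
    set S : Set ℝ := {b : ℝ | (βc ≤ b ∧ b < 0) ∧ Zb b φ₀ ≤ y} with hS
    have hSβ : βc ∈ S := by
      refine ⟨⟨le_refl _, hβneg⟩, ?_⟩
      rw [hβeqv φ₀ hφ₀]
      exact hKL φ₀ hφ₀
    have hSne : S.Nonempty := ⟨βc, hSβ⟩
    set η : ℝ := z₀ φ₀ - y with hη'
    have hη : 0 < η := by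
      have := hcmp0 φ₀ hφ₀
      simp only [hη']; linarith
    have hup : ∀ b, βc ≤ b → b < 0 → -(η/2) ≤ b → y < Zb b φ₀ := by
      intro b h1 h2 h3
      have hf := fam hq_cont hqnn (hZc b h1 h2) hz₀c (hZd b h1 h2) hz₀d (hZn b h1 h2) hz₀n
        (by rw [hZ1v b h1 h2, hz₀1]; exact h2.le) φ₀ hφ₀
      have := hf.2
      rw [hZ1v b h1 h2, hz₀1] at this
      simp only [hη'] at h3 ⊢
      linarith
    have hSb : ∀ b ∈ S, b < -(η/2) := by
      intro b hb
      by_contra hcon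
      push_neg at hcon
      have := hup b hb.1.1 hb.1.2 hcon
      have h2 := hb.2
      linarith
    have hbdd : BddAbove S := ⟨-(η/2), fun b hb => (hSb b hb).le⟩
    set bs : ℝ := sSup S with hbs'
    have hbs1 : βc ≤ bs := le_csSup hbdd hSβ
    have hbs2 : bs ≤ -(η/2) := csSup_le hSne (fun b hb => (hSb b hb).le)
    have hbsneg : bs < 0 := lt_of_le_of_lt hbs2 (by linarith)
    have claim1 : Zb bs φ₀ ≤ y := by
      by_contra hgt
      push_neg at hgt
      set ε : ℝ := (Zb bs φ₀ - y)/2 with hε'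
      have hε : 0 < ε := by simp only [hε']; linarith
      obtain ⟨b, hbS, hbgt⟩ := exists_lt_of_lt_csSup hSne (by linarith : bs - ε < bs)
      have hble : b ≤ bs := le_csSup hbdd hbS
      have hfam := famZ b bs hbS.1.1 hbS.1.2 hbs1 hbsneg hble φ₀ hφ₀
      have h4 := hbS.2
      simp only [hε'] at hbgt
      linarith [hfam.2]
    have claim2 : y ≤ Zb bs φ₀ := by
      by_contra hlt2
      push_neg at hlt2
      have hbsb : bs < -(η/4) := by
        rcases lt_or_ge bs (-(η/4)) with hl | hl
        · exact hl
        · exfalso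
          have := hup bs hbs1 hbsneg (by linarith)
          linarith
      set b' : ℝ := min (-(η/4)) (bs + (y - Zb bs φ₀)/2) with hb''
      have hb'gt : bs < b' := by
        simp only [hb'']
        apply lt_min hbsb
        linarith
      have hb'neg : b' < 0 := lt_of_le_of_lt (min_le_left _ _) (by linarith)
      have hb'ge : βc ≤ b' := le_trans hbs1 hb'gt.le
      have hfam := famZ bs b' hbs1 hbsneg hb'ge hb'neg hb'gt.le φ₀ hφ₀
      have hb'le : b' - bs ≤ (y - Zb bs φ₀)/2 := by
        simp only [hb'']
        have := min_le_right (-(η/4)) (bs + (y - Zb bs φ₀)/2)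
        linarith
      have hb'S : b' ∈ S := ⟨⟨hb'ge, hb'neg⟩, by linarith [hfam.2]⟩
      have := le_csSup hbdd hb'S
      linarith
    have heq : Zb bs φ₀ = zstar φ₀ := le_antisymm claim1 claim2
    constructor
    · -- existence
      refine ⟨Zb bs, ⟨hZc bs hbs1 hbsneg, hZd bs hbs1 hbsneg, heq⟩, hZ0v bs hbs1 hbsneg,
        ?_, ?_⟩
      · -- Zb bs < zstar on (φ₀, 1]
        have hcr := cross_c hc (hZd bs hbs1 hbsneg) hzsd hφ₀ heq
        intro t ht
        rcases eq_or_lt_of_le ht.2 with h1 | h1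
        · rw [h1]
          exact end1 hc hqnn (hZc bs hbs1 hbsneg) hzsc (hZd bs hbs1 hbsneg) hzsd
            (hZn bs hbs1 hbsneg) hzsn hφ₀ (fun s hs hφs => hcr.1 s hs hφs)
        · exact hcr.1 t ⟨lt_trans hφ₀.1 ht.1, h1⟩ ht.1
      · -- zβ ≤ Zb bs on (0,1]
        intro t ht
        rcases eq_or_lt_of_le ht.2 with h1 | h1
        · rw [h1, hzβ1, hZ1v bs hbs1 hbsneg]
          exact hbs1
        · have := fam hq_cont hqnn hzβc (hZc bs hbs1 hbsneg) hzβd (hZd bs hbs1 hbsneg)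
            hzβn (hZn bs hbs1 hbsneg)
            (by rw [hzβ1, hZ1v bs hbs1 hbsneg]; exact hbs1) t ⟨ht.1, h1⟩
          exact this.1
    · -- uniqueness
      intro z₁ z₂ h₁ h₂
      obtain ⟨h₁c, h₁d, h₁v⟩ := h₁
      obtain ⟨h₂c, h₂d, h₂v⟩ := h₂
      have hneg₁ : ∀ t ∈ Ioo (0:ℝ) 1, z₁ t < 0 := by
        apply neg_sol hh_cont hq_cont hq_pos h₁c h₁d hφ₀
        rw [h₁v]; exact hy
      have hneg₂ : ∀ t ∈ Ioo (0:ℝ) 1, z₂ t < 0 := by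
        apply neg_sol hh_cont hq_cont hq_pos h₂c h₂d hφ₀
        rw [h₂v]; exact hy
      have hEq : EqOn z₁ z₂ (Ioo 0 1) :=
        eq_of_touch hq_cont hqnn (le_refl (0:ℝ)) (le_refl (1:ℝ)) h₁d h₂d hneg₁ hneg₂ hφ₀
          (h₁v.trans h₂v.symm)
      obtain ⟨e0, e1⟩ := ext_ends h₁c h₂c hEq
      intro t ht
      rcases eq_or_lt_of_le ht.1 with h0 | h0
      · rw [← h0]; exact e0
      · rcases eq_or_lt_of_le ht.2 with h1 | h1
        · rw [h1]; exact e1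
        · exact hEq ⟨h0, h1⟩
  · -- monotonicity in φ₀
    intro φ₁ φ₀ hφ₁ hφ₀ hlt z₁ z₀ h₁ h₀
    obtain ⟨h₁c, h₁d, h₁v⟩ := h₁
    obtain ⟨h₀c, h₀d, h₀v⟩ := h₀
    have hneg₁ : ∀ t ∈ Ioo (0:ℝ) 1, z₁ t < 0 := by
      apply neg_sol hh_cont hq_cont hq_pos h₁c h₁d hφ₁
      rw [h₁v]; exact hzsn φ₁ hφ₁
    have hneg₀' : ∀ t ∈ Ioo (0:ℝ) 1, z₀ t < 0 := by
      apply neg_sol hh_cont hq_cont hq_pos h₀c h₀d hφ₀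
      rw [h₀v]; exact hzsn φ₀ hφ₀
    have hcr := cross_c hc h₀d hzsd hφ₀ h₀v
    have hgt : zstar φ₁ < z₀ φ₁ := hcr.2 φ₁ hφ₁ hlt
    have hltI : ∀ t ∈ Ioo (0:ℝ) 1, z₁ t < z₀ t := by
      apply lt_prop hq_cont hqnn h₁d h₀d hneg₁ hneg₀' hφ₁
      rw [h₁v]; exact hgt
    intro t ht
    rcases eq_or_lt_of_le ht.2 with h1 | h1
    · rw [h1]
      exact strict1 hqnn h₁c h₀c h₁d h₀d hneg₁ hneg₀' hltI
    · exact hltI t ⟨ht.1, h1⟩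
end
end

section
/- Assume (f), (D1), (g0) and (Dg), set q := D·g, let c* be the threshold for problem (P_c⁰⁰), let c ≥ c*, and let z be the solution of (P_c⁰⁰) (so z(0) = z(1) = 0). Then lim_{φ→1⁻} D(φ)/z(φ) = [ h(1) − c − √( (h(1) − c)² − 4 Ḋ(1) g(1) ) ] / (2 g(1)) if Ḋ(1) < 0, and lim_{φ→1⁻} D(φ)/z(φ) = min{ 0 , (h(1) − c)/g(1) } if Ḋ(1) = 0. -/
open Set Filter Topology MeasureTheory

noncomputable section
set_option maxHeartbeats 4000000

lemma stay_le {u : ℝ → ℝ} {a r b : ℝ}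
    (hc : ContinuousOn u (Icc a r))
    (hd : ∀ x ∈ Icc a r, u x = b → ∃ d, HasDerivAt u d x ∧ d < 0)
    (h0 : u a ≤ b) :
    ∀ x ∈ Icc a r, u x ≤ b := by
  by_contra hcon
  push_neg at hcon
  obtain ⟨x₀, hx₀, hx₀b⟩ := hcon
  set T : Set ℝ := Icc a x₀ ∩ u ⁻¹' (Iic b) with hT
  have hax₀ : a ≤ x₀ := hx₀.1
  have hTne : T.Nonempty := ⟨a, ⟨le_refl _, hax₀⟩, h0⟩
  have hsub : Icc a x₀ ⊆ Icc a r := Icc_subset_Icc le_rfl hx₀.2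
  have hTclosed : IsClosed T := by
    exact (hc.mono hsub).preimage_isClosed_of_isClosed isClosed_Icc (isClosed_Iic (a := b))
  have hTbdd : BddAbove T := (bddAbove_Icc (a := a) (b := x₀)).mono (fun x hx => hx.1)
  set φ₂ := sSup T with hφ₂
  have hφ₂T : φ₂ ∈ T := hTclosed.csSup_mem hTne hTbdd
  have hφ₂le : u φ₂ ≤ b := hφ₂T.2
  have hφ₂Icc : φ₂ ∈ Icc a x₀ := hφ₂T.1
  have hφ₂lt : φ₂ < x₀ := by
    rcases lt_or_eq_of_le hφ₂Icc.2 with h | h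
    · exact h
    · exact absurd (h ▸ hφ₂le) (not_le.mpr hx₀b)
  have hup : ∀ y ∈ Ioc φ₂ x₀, b < u y := by
    intro y hy
    by_contra hyb
    push_neg at hyb
    have : y ∈ T := ⟨⟨le_trans hφ₂Icc.1 hy.1.le, hy.2⟩, hyb⟩
    exact absurd (le_csSup hTbdd this) (not_le.mpr hy.1)
  -- u φ₂ = b
  have hIoosub : Ioo φ₂ x₀ ⊆ Icc a r := fun y hy =>
    ⟨le_trans hφ₂Icc.1 hy.1.le, le_trans hy.2.le hx₀.2⟩
  haveI hNB : (𝓝[Ioo φ₂ x₀] φ₂).NeBot := by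
    rw [← mem_closure_iff_nhdsWithin_neBot, closure_Ioo (ne_of_lt hφ₂lt)]
    exact ⟨le_rfl, hφ₂lt.le⟩
  have htend : Tendsto u (𝓝[Ioo φ₂ x₀] φ₂) (𝓝 (u φ₂)) :=
    (hc φ₂ (hsub hφ₂Icc)).tendsto.mono_left (nhdsWithin_mono _ hIoosub)
  have hub : u φ₂ = b := by
    refine le_antisymm hφ₂le (ge_of_tendsto htend ?_)
    filter_upwards [self_mem_nhdsWithin] with y hy
    exact (hup y ⟨hy.1, hy.2.le⟩).le
  obtain ⟨d, hdd, hdneg⟩ := hd φ₂ (hsub hφ₂Icc) hub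
  have hslope : Tendsto (slope u φ₂) (𝓝[Ioo φ₂ x₀] φ₂) (𝓝 d) :=
    (hasDerivAt_iff_tendsto_slope.mp hdd).mono_left
      (nhdsWithin_mono _ (fun y hy => ne_of_gt hy.1))
  have hev : ∀ᶠ y in 𝓝[Ioo φ₂ x₀] φ₂, slope u φ₂ y < 0 :=
    hslope.eventually_lt_const hdneg
  obtain ⟨y, hyneg, hymem⟩ := (hev.and self_mem_nhdsWithin).exists
  have : 0 < slope u φ₂ y := by
    rw [slope_def_field]
    have h1 : 0 < u y - u φ₂ := by
      rw [hub]; linarith [hup y ⟨hymem.1, hymem.2.le⟩]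
    have h2 : 0 < y - φ₂ := sub_pos.mpr hymem.1
    positivity
  linarith

lemma stay_ge {u : ℝ → ℝ} {a r b : ℝ}
    (hc : ContinuousOn u (Icc a r))
    (hd : ∀ x ∈ Icc a r, u x = b → ∃ d, HasDerivAt u d x ∧ 0 < d)
    (h0 : b ≤ u a) :
    ∀ x ∈ Icc a r, b ≤ u x := by
  intro x hx
  have key : ∀ x ∈ Icc a r, -u x ≤ -b := by
    refine stay_le (u := fun x => -u x) (a := a) (r := r) (b := -b) (hc.neg) ?_ (neg_le_neg h0)
    intro x hx hxb
    have hxb' : u x = b := by simpa using congrArg Neg.neg hxb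
    obtain ⟨d, hdd, hdpos⟩ := hd x hx hxb'
    exact ⟨-d, hdd.neg, by linarith⟩
  have := key x hx
  linarith

lemma quad_lower (A b e lam' : ℝ) (hA : 0 < A) (hlam' : lam' ≤ 0)
    (hpos : ∀ v ≤ lam', 0 < A*v^2 - b*v + e) :
    ∃ δ > 0, ∀ v ≤ lam', δ*(1+v^2) ≤ A*v^2 - b*v + e := by
  obtain ⟨R, hRdef⟩ : ∃ R : ℝ, R = (2*(|b|+|e|+1))/A + 1 := ⟨_, rfl⟩
  have habs : (0:ℝ) ≤ |b| + |e| + 1 := by positivity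
  have hR1 : 1 ≤ R := by
    have h0 : 0 ≤ (2*(|b|+|e|+1))/A := by positivity
    rw [hRdef]; linarith
  have hRA : A * R = 2*(|b|+|e|+1) + A := by
    rw [hRdef]; field_simp
  have hfar : ∀ v ≤ -R, (A/4)*(1+v^2) ≤ A*v^2 - b*v + e := by
    intro v hv
    have hv1 : 1 ≤ -v := by linarith
    have hvR : R ≤ -v := by linarith
    have hb1 : b*v ≤ |b| * |v| := by
      have := le_abs_self (b*v)
      rw [abs_mul] at this; linarith
    have hb2 : e ≥ -|e| := neg_abs_le e
    have hvv : |v| = -v := abs_of_nonpos (by linarith)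
    -- (A/2) v^2 ≥ (|b|+|e|+1)(-v) ≥ |b||v| + |e|
    have key : (|b|+|e|+1) * (-v) ≤ (A/2) * v^2 := by
      have step : (2*(|b|+|e|+1)) * (-v) ≤ (A * R) * (-v) := by
        nlinarith [mul_nonneg hA.le (by linarith : (0:ℝ) ≤ -v)]
      have step2 : (A*R)*(-v) ≤ A * ((-v)*(-v)) := by
        have hAv : 0 ≤ A * (-v) := mul_nonneg hA.le (by linarith)
        have := mul_le_mul_of_nonneg_left hvR hAv
        nlinarith
      nlinarith
    rw [hvv] at hb1
    have hsq : 1 ≤ v^2 := by nlinarith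
    nlinarith [mul_nonneg (abs_nonneg e) (by linarith : (0:ℝ) ≤ -v - 1),
      mul_nonneg hA.le (by linarith : (0:ℝ) ≤ v^2 - 1)]
  rcases le_or_gt lam' (-R) with hcase | hcase
  · exact ⟨A/4, by positivity, fun v hv => hfar v (le_trans hv hcase)⟩
  · have hne : (Icc (-R) lam').Nonempty := ⟨-R, le_refl _, by linarith⟩
    have hcont : ContinuousOn (fun v => A*v^2 - b*v + e) (Icc (-R) lam') := by fun_prop
    obtain ⟨v₀, hv₀mem, hv₀min⟩ := isCompact_Icc.exists_isMinOn hne hcont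
    have hm : 0 < A*v₀^2 - b*v₀ + e := hpos v₀ hv₀mem.2
    refine ⟨min (A/4) ((A*v₀^2 - b*v₀ + e)/(1+R^2)), by positivity, fun v hv => ?_⟩
    rcases le_or_gt v (-R) with hv2 | hv2
    · calc min (A/4) ((A*v₀^2 - b*v₀ + e)/(1+R^2))*(1+v^2) ≤ (A/4)*(1+v^2) := by
            apply mul_le_mul_of_nonneg_right (min_le_left _ _) (by positivity)
        _ ≤ _ := hfar v hv2
    · have hvmem : v ∈ Icc (-R) lam' := ⟨hv2.le, hv⟩
      have hvsq : v^2 ≤ R^2 := by nlinarith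
      calc min (A/4) ((A*v₀^2 - b*v₀ + e)/(1+R^2))*(1+v^2)
            ≤ ((A*v₀^2 - b*v₀ + e)/(1+R^2))*(1+R^2) := by
            apply mul_le_mul (min_le_right _ _) (by linarith) (by positivity) (by positivity)
        _ = A*v₀^2 - b*v₀ + e := by field_simp
        _ ≤ _ := hv₀min hvmem

lemma cont_neg_band (b₁ b₂ : ℝ) (P : ℝ → ℝ) (hc : ContinuousOn P (Icc b₁ b₂))
    (hne : b₁ ≤ b₂) (h : ∀ v ∈ Icc b₁ b₂, P v < 0) :
    ∃ δ > 0, ∀ v ∈ Icc b₁ b₂, P v ≤ -δ := by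
  obtain ⟨v₀, hv₀mem, hv₀max⟩ := isCompact_Icc.exists_isMaxOn ⟨b₁, le_refl _, hne⟩ hc
  refine ⟨-(P v₀), by linarith [h v₀ hv₀mem], fun v hv => ?_⟩
  have := hv₀max hv
  simpa using this

lemma log_blowup {u u' : ℝ → ℝ} {φ₀ η B : ℝ}
    (hφ₀ : φ₀ < 1) (hη : 0 < η)
    (hc : ∀ r, φ₀ < r → r < 1 → ContinuousOn u (Icc φ₀ r))
    (hd : ∀ t, φ₀ < t → t < 1 → HasDerivAt u (u' t) t)
    (hd' : ∀ t, φ₀ < t → t < 1 → η/(1-t) ≤ u' t)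
    (hB : ∀ t, φ₀ ≤ t → t < 1 → u t ≤ B) : False := by
  have hBu : u φ₀ ≤ B := hB φ₀ le_rfl hφ₀
  obtain ⟨E, hEdef⟩ : ∃ E : ℝ, E = (B - u φ₀)/η + 1 := ⟨_, rfl⟩
  have hE1 : 1 ≤ E := by
    rw [hEdef]
    have : 0 ≤ (B - u φ₀)/η := div_nonneg (by linarith) hη.le
    linarith
  obtain ⟨r, hrdef⟩ : ∃ r : ℝ, r = 1 - (1-φ₀)*Real.exp (-E) := ⟨_, rfl⟩
  have hexp_pos : 0 < Real.exp (-E) := Real.exp_pos _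
  have hexp_lt : Real.exp (-E) < 1 := Real.exp_lt_one_iff.mpr (by linarith)
  have hr1 : r < 1 := by rw [hrdef]; nlinarith
  have hφ₀r : φ₀ < r := by rw [hrdef]; nlinarith
  -- comparison function
  set w : ℝ → ℝ := fun t => -η * Real.log (1 - t) with hw
  have hwd : ∀ t, t < 1 → HasDerivAt w (η/(1-t)) t := by
    intro t ht
    have h1 : HasDerivAt (fun t : ℝ => 1 - t) (-1) t := by
      exact (hasDerivAt_id' t).const_sub (1:ℝ)
    have h2 : HasDerivAt (fun t : ℝ => Real.log (1 - t)) (-1/(1-t)) t :=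
      h1.log (by linarith)
    have := h2.const_mul (-η)
    refine HasDerivAt.congr_deriv this ?_
    field_simp
  have hwc : ContinuousOn w (Icc φ₀ r) := by
    apply ContinuousOn.mul continuousOn_const
    apply Real.continuousOn_log.comp (by fun_prop)
    intro x hx
    simp only [mem_compl_iff, mem_singleton_iff]
    have : x ≤ r := hx.2
    intro hc0; rw [sub_eq_zero] at hc0; linarith
  obtain ⟨ξ, hξmem, hξeq⟩ := exists_hasDerivAt_eq_slope (fun t => u t - w t)
    (fun t => u' t - η/(1-t)) hφ₀r
    ((hc r hφ₀r hr1).sub hwc)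
    (fun t ht => (hd t ht.1 (lt_trans ht.2 hr1)).sub (hwd t (lt_trans ht.2 hr1)))
  have hξpos : 0 ≤ u' ξ - η/(1-ξ) := by
    have := hd' ξ hξmem.1 (lt_trans hξmem.2 hr1)
    linarith
  have hslope : 0 ≤ ((u r - w r) - (u φ₀ - w φ₀))/(r - φ₀) := hξeq ▸ hξpos
  have hwdiff : w r - w φ₀ = η * E := by
    have h1r : 1 - r = (1-φ₀)*Real.exp (-E) := by rw [hrdef]; ring
    have hlog : Real.log (1-r) = Real.log (1-φ₀) + (-E) := by
      rw [h1r, Real.log_mul (by linarith) (ne_of_gt hexp_pos), Real.log_exp]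
    simp only [hw]
    rw [hlog]; ring
  have hur : u φ₀ + η * E ≤ u r := by
    have hrpos : 0 < r - φ₀ := by linarith
    have := (div_nonneg_iff.mp hslope)
    have h2 : 0 ≤ (u r - w r) - (u φ₀ - w φ₀) := by
      rcases this with ⟨h,_⟩|⟨_,h⟩
      · exact h
      · linarith
    linarith [hwdiff]
  have hfin : u r ≤ B := hB r hφ₀r.le hr1
  have hEval : η * E = (B - u φ₀) + η := by
    rw [hEdef]; field_simp
  linarith

theorem core (h D D' g z : ℝ → ℝ) (c lam : ℝ)
    (hh_cont : ContinuousOn h (Icc 0 1))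
    (hD' : ∀ x ∈ Icc (0:ℝ) 1, HasDerivWithinAt D (D' x) (Icc 0 1) x)
    (hD'_cont : ContinuousOn D' (Icc 0 1))
    (hD_pos : ∀ φ ∈ Ioo (0:ℝ) 1, 0 < D φ)
    (hD1 : D 1 = 0)
    (hg_cont : ContinuousOn g (Icc 0 1))
    (hg_pos : ∀ φ ∈ Ioc (0:ℝ) 1, 0 < g φ)
    (zc : ContinuousOn z (Icc 0 1))
    (zd : ∀ φ ∈ Ioo (0:ℝ) 1, HasDerivAt z (h φ - c - D φ * g φ / z φ) φ)
    (zneg : ∀ φ ∈ Ioo (0:ℝ) 1, z φ < 0)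
    (z1 : z 1 = 0)
    (hlam : lam ≤ 0)
    (hPbelow : ∀ v < lam, 0 < g 1 * v^2 - (h 1 - c) * v + D' 1)
    (hPabove : ∀ v, lam < v → v < 0 → g 1 * v^2 - (h 1 - c) * v + D' 1 < 0)
    (hP0 : lam < 0 → D' 1 < 0 ∨ (D' 1 = 0 ∧ h 1 - c < 0)) :
    Tendsto (fun φ => D φ / z φ) (𝓝[<] (1:ℝ)) (𝓝 lam) := by
  have g1pos : 0 < g 1 := hg_pos 1 ⟨one_pos, le_rfl⟩
  have Dc : ContinuousOn D (Icc 0 1) := fun x hx => (hD' x hx).continuousWithinAt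
  -- global bounds
  obtain ⟨Ch, hCh0, hCh⟩ : ∃ C : ℝ, 0 ≤ C ∧ ∀ x ∈ Icc (0:ℝ) 1, |h x - c| ≤ C := by
    obtain ⟨C, hC⟩ := isCompact_Icc.exists_bound_of_continuousOn (hh_cont.sub continuousOn_const)
    exact ⟨max C 0, le_max_right _ _, fun x hx => le_trans (by simpa using hC x hx) (le_max_left _ _)⟩
  obtain ⟨CD, hCD0, hCD⟩ : ∃ C : ℝ, 0 ≤ C ∧ ∀ x ∈ Icc (0:ℝ) 1, |D' x| ≤ C := by
    obtain ⟨C, hC⟩ := isCompact_Icc.exists_bound_of_continuousOn hD'_cont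
    exact ⟨max C 0, le_max_right _ _, fun x hx => le_trans (by simpa using hC x hx) (le_max_left _ _)⟩
  obtain ⟨G, hG0, hG⟩ : ∃ C : ℝ, 0 < C ∧ ∀ x ∈ Icc (0:ℝ) 1, |g x| ≤ C := by
    obtain ⟨C, hC⟩ := isCompact_Icc.exists_bound_of_continuousOn hg_cont
    refine ⟨max C 1, lt_of_lt_of_le one_pos (le_max_right _ _),
      fun x hx => le_trans (by simpa using hC x hx) (le_max_left _ _)⟩
  have hIccsub : Icc (1/2:ℝ) 1 ⊆ Icc 0 1 := Icc_subset_Icc (by norm_num) le_rfl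
  obtain ⟨gm, hgm0, hgm⟩ : ∃ m : ℝ, 0 < m ∧ ∀ x ∈ Icc (1/2:ℝ) 1, m ≤ g x := by
    obtain ⟨x₀, hx₀mem, hx₀min⟩ := isCompact_Icc.exists_isMinOn (α := ℝ)
      ⟨1, by norm_num, le_rfl⟩ (hg_cont.mono hIccsub)
    exact ⟨g x₀, hg_pos x₀ ⟨by linarith [hx₀mem.1], hx₀mem.2⟩, fun x hx => hx₀min hx⟩
  have hgnn : ∀ x ∈ Icc (1/2:ℝ) 1, 0 ≤ g x := fun x hx => le_trans hgm0.le (hgm x hx)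
  -- D decay
  have hDdecay : ∀ φ, 1/2 ≤ φ → φ < 1 → D φ ≤ CD * (1-φ) := by
    intro φ hφa hφ1
    obtain ⟨ξ, hξmem, hξeq⟩ := exists_hasDerivAt_eq_slope D D' hφ1
      (Dc.mono (Icc_subset_Icc (by linarith) le_rfl))
      (fun t ht => (hD' t ⟨by linarith [ht.1], ht.2.le⟩).hasDerivAt
        (Icc_mem_nhds (by linarith [ht.1]) ht.2))
    have hξb := hCD ξ ⟨by linarith [hξmem.1], hξmem.2.le⟩
    rw [hD1] at hξeq
    have h1φ : 0 < 1 - φ := by linarith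
    have : D φ = -(D' ξ) * (1-φ) := by
      field_simp at hξeq ⊢
      nlinarith [hξeq]
    rw [this]
    have : -(D' ξ) ≤ CD := by cases abs_le.mp hξb; linarith
    nlinarith
  -- derivative of u = D/z
  have hu_deriv : ∀ x, 0 < x → x < 1 → HasDerivAt (fun φ => D φ / z φ)
      ((g x * (D x / z x)^2 - (h x - c)*(D x / z x) + D' x) / z x) x := by
    intro x hx0 hx1
    have hzx : z x ≠ 0 := ne_of_lt (zneg x ⟨hx0, hx1⟩)
    have hDx : HasDerivAt D (D' x) x := (hD' x ⟨hx0.le, hx1.le⟩).hasDerivAt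
      (Icc_mem_nhds hx0 hx1)
    have := hDx.div (zd x ⟨hx0, hx1⟩) hzx
    refine HasDerivAt.congr_deriv this ?_
    field_simp
    ring
  -- continuity of u on compacts
  have ucont : ∀ a r : ℝ, 0 < a → r < 1 → ContinuousOn (fun φ => D φ / z φ) (Icc a r) := by
    intro a r ha hr
    have hsub : Icc a r ⊆ Icc 0 1 := Icc_subset_Icc ha.le hr.le
    exact (Dc.mono hsub).div (zc.mono hsub)
      (fun x hx => ne_of_lt (zneg x ⟨lt_of_lt_of_le ha hx.1, lt_of_le_of_lt hx.2 hr⟩))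
  -- z bounds via MVT
  have hzmvt : ∀ φ, 0 < φ → φ < 1 → ∃ ξ, φ < ξ ∧ ξ < 1 ∧
      -(z φ) = (h ξ - c - D ξ * g ξ / z ξ) * (1-φ) := by
    intro φ hφ0 hφ1
    obtain ⟨ξ, hξmem, hξeq⟩ := exists_hasDerivAt_eq_slope z
      (fun t => h t - c - D t * g t / z t) hφ1
      (zc.mono (Icc_subset_Icc hφ0.le le_rfl))
      (fun t ht => zd t ⟨lt_trans hφ0 ht.1, ht.2⟩)
    refine ⟨ξ, hξmem.1, hξmem.2, ?_⟩
    rw [z1] at hξeq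
    have h1φ : 0 < 1 - φ := by linarith
    field_simp at hξeq
    nlinarith [hξeq]
  -- near-1 control
  have hnear : ∀ η : ℝ, 0 < η → ∃ a, 1/2 ≤ a ∧ a < 1 ∧ ∀ φ, a ≤ φ → φ ≤ 1 →
      |g φ - g 1| ≤ η ∧ |h φ - h 1| ≤ η ∧ |D' φ - D' 1| ≤ η := by
    intro η hη
    have h1mem : (1:ℝ) ∈ Icc (0:ℝ) 1 := ⟨zero_le_one, le_rfl⟩
    have cg := Metric.continuousWithinAt_iff.mp (hg_cont 1 h1mem) η hη
    have ch := Metric.continuousWithinAt_iff.mp (hh_cont 1 h1mem) η hη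
    have cD := Metric.continuousWithinAt_iff.mp (hD'_cont 1 h1mem) η hη
    obtain ⟨δ₁, hδ₁, hg1⟩ := cg
    obtain ⟨δ₂, hδ₂, hh1⟩ := ch
    obtain ⟨δ₃, hδ₃, hD1'⟩ := cD
    obtain ⟨δ, hδdef⟩ : ∃ d : ℝ, d = min δ₁ (min δ₂ δ₃) := ⟨_, rfl⟩
    have hδ0 : 0 < δ := by rw [hδdef]; positivity
    refine ⟨max (1/2) (1 - δ/2), le_max_left _ _, ?_, ?_⟩
    · apply max_lt (by norm_num) (by linarith)
    · intro φ hφa hφ1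
      have hφhalf : 1/2 ≤ φ := le_trans (le_max_left _ _) hφa
      have hφδ : 1 - δ/2 ≤ φ := le_trans (le_max_right _ _) hφa
      have hφmem : φ ∈ Icc (0:ℝ) 1 := ⟨by linarith, hφ1⟩
      have hdist : dist φ 1 < δ := by
        rw [Real.dist_eq, abs_of_nonpos (by linarith)]
        linarith
      refine ⟨?_, ?_, ?_⟩
      · have := hg1 hφmem (lt_of_lt_of_le hdist (by rw [hδdef]; exact min_le_left _ _))
        rw [Real.dist_eq] at this; exact this.le
      · have := hh1 hφmem (lt_of_lt_of_le hdist (by rw [hδdef]; exact le_trans (min_le_right _ _) (min_le_left _ _)))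
        rw [Real.dist_eq] at this; exact this.le
      · have := hD1' hφmem (lt_of_lt_of_le hdist (by rw [hδdef]; exact le_trans (min_le_right _ _) (min_le_right _ _)))
        rw [Real.dist_eq] at this; exact this.le
  -- z upper/lower bounds
  have hzub : ∀ φ M, 1/2 ≤ φ → φ < 1 → 0 ≤ M →
      (∀ x, φ < x → x < 1 → -M ≤ D x / z x) → -z φ ≤ (Ch + G*M)*(1-φ) := by
    intro φ M hφa hφ1 hM hbd
    obtain ⟨ξ, hξ1, hξ2, hξeq⟩ := hzmvt φ (by linarith) hφ1
    rw [hξeq]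
    have hξmem : ξ ∈ Icc (0:ℝ) 1 := ⟨by linarith, hξ2.le⟩
    have hξmem' : ξ ∈ Icc (1/2:ℝ) 1 := ⟨by linarith, hξ2.le⟩
    have huξ := hbd ξ hξ1 hξ2
    have hrw : D ξ * g ξ / z ξ = g ξ * (D ξ / z ξ) := by ring
    have hgb := hG ξ hξmem
    have hgn := hgnn ξ hξmem'
    have hhb := hCh ξ hξmem
    have hmain : h ξ - c - D ξ * g ξ / z ξ ≤ Ch + G*M := by
      rw [hrw]
      have h1 : h ξ - c ≤ Ch := (abs_le.mp hhb).2
      have huξ0 : D ξ / z ξ < 0 :=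
        div_neg_of_pos_of_neg (hD_pos ξ ⟨by linarith, hξ2⟩) (zneg ξ ⟨by linarith, hξ2⟩)
      have h2 : g ξ * (-(D ξ / z ξ)) ≤ G * M := by
        apply mul_le_mul (le_trans (le_abs_self _) hgb) (by linarith) (by linarith) hG0.le
      nlinarith
    nlinarith [hmain, (by linarith : (0:ℝ) < 1 - φ)]
  have hzlb : ∀ φ M, 1/2 ≤ φ → φ < 1 → 0 ≤ M →
      (∀ x, φ < x → x < 1 → D x / z x ≤ -M) → (gm*M - Ch)*(1-φ) ≤ -z φ := by
    intro φ M hφa hφ1 hM hbd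
    obtain ⟨ξ, hξ1, hξ2, hξeq⟩ := hzmvt φ (by linarith) hφ1
    rw [hξeq]
    have hξmem : ξ ∈ Icc (0:ℝ) 1 := ⟨by linarith, hξ2.le⟩
    have hξmem' : ξ ∈ Icc (1/2:ℝ) 1 := ⟨by linarith, hξ2.le⟩
    have huξ := hbd ξ hξ1 hξ2
    have hrw : D ξ * g ξ / z ξ = g ξ * (D ξ / z ξ) := by ring
    have hgn := hgnn ξ hξmem'
    have hhb := hCh ξ hξmem
    have hmain : gm*M - Ch ≤ h ξ - c - D ξ * g ξ / z ξ := by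
      rw [hrw]
      have h1 : -Ch ≤ h ξ - c := (abs_le.mp hhb).1
      have h2 : gm * M ≤ g ξ * (-(D ξ / z ξ)) :=
        mul_le_mul (hgm ξ hξmem') (by linarith) hM hgn
      nlinarith
    nlinarith [hmain, (by linarith : (0:ℝ) < 1 - φ)]
  -- uniform F difference control near 1
  have hFdiff : ∀ η : ℝ, 0 < η → ∃ a, 1/2 ≤ a ∧ a < 1 ∧ ∀ φ, a ≤ φ → φ ≤ 1 → ∀ v : ℝ,
      |g φ*v^2 - (h φ - c)*v + D' φ - (g 1*v^2 - (h 1 - c)*v + D' 1)| ≤ 2*η*(1+v^2) := by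
    intro η hη
    obtain ⟨a, haH, ha1, hctrl⟩ := hnear η hη
    refine ⟨a, haH, ha1, ?_⟩
    intro φ hφa hφ1 v
    obtain ⟨hgc, hhc, hDc'⟩ := hctrl φ hφa hφ1
    have heq : g φ*v^2 - (h φ - c)*v + D' φ - (g 1*v^2 - (h 1 - c)*v + D' 1)
        = ((g φ - g 1)*v^2 - (h φ - h 1)*v) + (D' φ - D' 1) := by ring
    rw [heq]
    have habsv : |v| ≤ 1 + v^2 := by
      rcases abs_cases v with ⟨h1,_⟩|⟨h1,_⟩ <;> rw [h1] <;> nlinarith [sq_nonneg (v-1), sq_nonneg (v+1)]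
    have t1 : |(g φ - g 1)*v^2| ≤ η*v^2 := by
      rw [abs_mul, abs_of_nonneg (sq_nonneg v)]
      apply mul_le_mul_of_nonneg_right hgc (sq_nonneg v)
    have t2 : |(h φ - h 1)*v| ≤ η*(1+v^2) := by
      rw [abs_mul]
      calc |h φ - h 1| * |v| ≤ η * |v| := mul_le_mul_of_nonneg_right hhc (abs_nonneg v)
        _ ≤ η*(1+v^2) := mul_le_mul_of_nonneg_left habsv hη.le
    calc |((g φ - g 1)*v^2 - (h φ - h 1)*v) + (D' φ - D' 1)|
        ≤ |(g φ - g 1)*v^2 - (h φ - h 1)*v| + |D' φ - D' 1| := abs_add_le _ _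
      _ ≤ (|(g φ - g 1)*v^2| + |(h φ - h 1)*v|) + |D' φ - D' 1| := by
          linarith [abs_sub ((g φ - g 1)*v^2) ((h φ - h 1)*v)]
      _ ≤ (η*v^2 + η*(1+v^2)) + η := by linarith
      _ ≤ 2*η*(1+v^2) := by nlinarith [sq_nonneg v]
  -- uniform F positivity below a level
  have hFpos : ∀ lam', lam' < lam → lam' ≤ 0 → ∃ a δ, 1/2 ≤ a ∧ a < 1 ∧ 0 < δ ∧
      ∀ φ, a ≤ φ → φ ≤ 1 → ∀ v, v ≤ lam' → δ ≤ g φ*v^2 - (h φ - c)*v + D' φ := by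
    intro lam' hlam' hlam'0
    obtain ⟨δ0, hδ0, hquad⟩ := quad_lower (g 1) (h 1 - c) (D' 1) lam' g1pos hlam'0
      (fun v hv => hPbelow v (lt_of_le_of_lt hv hlam'))
    obtain ⟨a, haH, ha1, hdiff⟩ := hFdiff (δ0/4) (by positivity)
    refine ⟨a, δ0/2, haH, ha1, by positivity, ?_⟩
    intro φ hφa hφ1 v hv
    have h1 := hquad v hv
    have h2 := hdiff φ hφa hφ1 v
    have h3 := (abs_le.mp h2).1
    have h4 : 0 ≤ 1 + v^2 := by positivity
    nlinarith
  -- uniform F negativity on a compact band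
  have hFneg : ∀ b₁ b₂, b₁ ≤ b₂ → (∀ v, b₁ ≤ v → v ≤ b₂ → g 1*v^2 - (h 1 - c)*v + D' 1 < 0) →
      ∃ a δ, 1/2 ≤ a ∧ a < 1 ∧ 0 < δ ∧
      ∀ φ, a ≤ φ → φ ≤ 1 → ∀ v, b₁ ≤ v → v ≤ b₂ → g φ*v^2 - (h φ - c)*v + D' φ ≤ -δ := by
    intro b₁ b₂ hb hneg
    obtain ⟨δ2, hδ2, hband⟩ := cont_neg_band b₁ b₂ (fun v => g 1*v^2 - (h 1 - c)*v + D' 1)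
      (by fun_prop) hb (fun v hv => hneg v hv.1 hv.2)
    obtain ⟨V, hVdef⟩ : ∃ V : ℝ, V = 1 + max (b₁^2) (b₂^2) := ⟨_, rfl⟩
    have hV1 : 1 ≤ V := by rw [hVdef]; nlinarith [le_max_left (b₁^2) (b₂^2), sq_nonneg b₁]
    have hVv : ∀ v, b₁ ≤ v → v ≤ b₂ → 1 + v^2 ≤ V := by
      intro v h1 h2
      rw [hVdef]
      rcases le_or_gt v 0 with hv0 | hv0
      · have : v^2 ≤ b₁^2 := by nlinarith
        nlinarith [le_max_left (b₁^2) (b₂^2)]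
      · have : v^2 ≤ b₂^2 := by nlinarith
        nlinarith [le_max_right (b₁^2) (b₂^2)]
    obtain ⟨a, haH, ha1, hdiff⟩ := hFdiff (δ2/(4*V)) (by positivity)
    refine ⟨a, δ2/2, haH, ha1, by positivity, ?_⟩
    intro φ hφa hφ1 v hv1 hv2
    have h1 := hband v ⟨hv1, hv2⟩
    have h2 := (abs_le.mp (hdiff φ hφa hφ1 v)).2
    have h3 := hVv v hv1 hv2
    have hV0 : V ≠ 0 := by linarith
    have h4 : 2*(δ2/(4*V))*(1+v^2) ≤ δ2/2 := by
      have hc1 : 2*(δ2/(4*V))*(1+v^2) ≤ 2*(δ2/(4*V))*V :=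
        mul_le_mul_of_nonneg_left h3 (by positivity)
      have hc2 : 2*(δ2/(4*V))*V = δ2/2 := by field_simp; ring
      linarith
    nlinarith
  -- LOWER BOUND
  have lower : ∀ ε, 0 < ε → ∃ a, 1/2 ≤ a ∧ a < 1 ∧ ∀ φ, a ≤ φ → φ < 1 → lam - ε < D φ / z φ := by
    intro ε hε
    obtain ⟨a, δ, haH, ha1, hδ, hF⟩ := hFpos (lam - ε) (by linarith) (by linarith)
    refine ⟨a, haH, ha1, ?_⟩
    intro φ₀ hφ₀a hφ₀1
    by_contra hcon
    push_neg at hcon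
    have hφ₀h : 1/2 ≤ φ₀ := le_trans haH hφ₀a
    have hφ₀0 : 0 < φ₀ := by linarith
    have hinv : ∀ x, φ₀ ≤ x → x < 1 → D x / z x ≤ lam - ε := by
      intro x hx hx1
      refine stay_le (ucont φ₀ x (by linarith) hx1) ?_ hcon x ⟨hx, le_rfl⟩
      intro y hy hyeq
      have hy0 : 0 < y := by linarith [hy.1]
      have hy1 : y < 1 := lt_of_le_of_lt hy.2 hx1
      refine ⟨_, hu_deriv y hy0 hy1, ?_⟩
      apply div_neg_of_pos_of_neg
      · rw [hyeq]
        exact lt_of_lt_of_le hδ (hF y (le_trans hφ₀a hy.1) hy1.le (lam - ε) le_rfl)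
      · exact zneg y ⟨hy0, hy1⟩
    have hdec : ∀ x y, φ₀ ≤ x → x < y → y < 1 → D y / z y ≤ D x / z x := by
      intro x y hx hxy hy1
      obtain ⟨ξ, hξmem, hξeq⟩ := exists_hasDerivAt_eq_slope (fun φ => D φ / z φ)
        (fun t => (g t*(D t / z t)^2 - (h t - c)*(D t / z t) + D' t) / z t) hxy
        (ucont x y (by linarith) hy1)
        (fun t ht => hu_deriv t (by linarith [ht.1]) (lt_trans ht.2 hy1))
      have hξ0 : 0 < ξ := by linarith [hξmem.1]
      have hξ1 : ξ < 1 := lt_trans hξmem.2 hy1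
      have huξ : D ξ / z ξ ≤ lam - ε := hinv ξ (by linarith [hξmem.1]) hξ1
      have hFξ : 0 < g ξ*(D ξ / z ξ)^2 - (h ξ - c)*(D ξ / z ξ) + D' ξ :=
        lt_of_lt_of_le hδ (hF ξ (by linarith [hξmem.1, le_trans haH hφ₀a]) hξ1.le _ huξ)
      have hslope_neg : (g ξ*(D ξ / z ξ)^2 - (h ξ - c)*(D ξ / z ξ) + D' ξ) / z ξ < 0 :=
        div_neg_of_pos_of_neg hFξ (zneg ξ ⟨hξ0, hξ1⟩)
      rw [hξeq] at hslope_neg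
      rcases div_neg_iff.mp hslope_neg with ⟨_, hd⟩ | ⟨hn, _⟩
      · linarith
      · linarith
    obtain ⟨M, hMdef⟩ : ∃ M : ℝ, M = max 1 ((Ch + CD + 1)/gm) := ⟨_, rfl⟩
    have hM1 : 1 ≤ M := hMdef ▸ le_max_left _ _
    have hMg : Ch + CD + 1 ≤ gm*M := by
      have hle : (Ch + CD + 1)/gm ≤ M := hMdef ▸ le_max_right _ _
      calc Ch + CD + 1 = gm * ((Ch+CD+1)/gm) := by field_simp
        _ ≤ gm*M := by nlinarith
    by_cases hcaseA : ∃ φ₁, φ₀ ≤ φ₁ ∧ φ₁ < 1 ∧ D φ₁ / z φ₁ ≤ -M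
    · obtain ⟨φ₁, hφ₁₀, hφ₁1, hφ₁M⟩ := hcaseA
      obtain ⟨φ₂, hφ₂def⟩ : ∃ x : ℝ, x = (φ₁ + 1)/2 := ⟨_, rfl⟩
      have hφ₁h : 1/2 ≤ φ₁ := by linarith
      have hφ₂a : φ₁ < φ₂ := by rw [hφ₂def]; linarith
      have hφ₂1 : φ₂ < 1 := by rw [hφ₂def]; linarith
      have hφ₂h : 1/2 ≤ φ₂ := by rw [hφ₂def]; linarith
      have hub2 : ∀ x, φ₂ < x → x < 1 → D x / z x ≤ -M :=
        fun x h1 h2 => le_trans (hdec φ₁ x hφ₁₀ (lt_trans hφ₂a h1) h2) hφ₁M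
      have hzl := hzlb φ₂ M hφ₂h hφ₂1 (by linarith) hub2
      have hu2 : D φ₂ / z φ₂ ≤ -M := le_trans (hdec φ₁ φ₂ hφ₁₀ hφ₂a hφ₂1) hφ₁M
      have hDd := hDdecay φ₂ hφ₂h hφ₂1
      have hz2 : z φ₂ < 0 := zneg φ₂ ⟨by linarith, hφ₂1⟩
      have hMz : M*(-(z φ₂)) ≤ D φ₂ := by
        have := (div_le_iff_of_neg hz2).mp hu2
        nlinarith
      have h1φ₂ : 0 < 1 - φ₂ := by linarith
      have hstep : M*((gm*M - Ch)*(1-φ₂)) ≤ M*(-(z φ₂)) :=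
        mul_le_mul_of_nonneg_left hzl (by linarith)
      nlinarith [hstep, hMz, hDd, h1φ₂, hM1, hMg, mul_le_mul_of_nonneg_right hMg (le_of_lt h1φ₂)]
    · push_neg at hcaseA
      have hKpos : 0 < Ch + G*M := by nlinarith
      apply log_blowup (u := fun t => -(D t / z t))
        (u' := fun t => -((g t*(D t / z t)^2 - (h t - c)*(D t / z t) + D' t) / z t))
        (φ₀ := φ₀) (η := δ/(Ch + G*M)) (B := M) hφ₀1 (by positivity)
      · intro r hr hr1
        exact (ucont φ₀ r (by linarith) hr1).neg
      · intro t ht ht1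
        exact (hu_deriv t (by linarith) ht1).neg
      · intro t ht ht1
        have hzb : -(z t) ≤ (Ch + G*M)*(1-t) := by
          apply hzub t M (by linarith) ht1 (by linarith)
          intro x hx hx1
          exact (hcaseA x (by linarith) hx1).le
        have hFt : δ ≤ g t*(D t/z t)^2 - (h t - c)*(D t/z t) + D' t :=
          hF t (by linarith) ht1.le _ (hinv t ht.le ht1)
        have hzt : z t < 0 := zneg t ⟨by linarith, ht1⟩
        have hzt' : 0 < -(z t) := by linarith
        have h1t : 0 < 1 - t := by linarith
        have e1 : -((g t*(D t/z t)^2 - (h t - c)*(D t/z t) + D' t) / z t)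
            = (g t*(D t/z t)^2 - (h t - c)*(D t/z t) + D' t) / (-(z t)) := by
          rw [div_neg]
        rw [e1]
        calc (δ/(Ch + G*M))/(1-t) = δ/((Ch + G*M)*(1-t)) := by rw [div_div]
          _ ≤ δ/(-(z t)) := by
              apply div_le_div_of_nonneg_left hδ.le hzt' hzb
          _ ≤ _ := by
              apply div_le_div_of_nonneg_right hFt hzt'.le
      · intro t ht ht1
        have := hcaseA t (by linarith) ht1
        linarith
  -- UPPER BOUND
  have upper : ∀ ε, 0 < ε → ∃ a, 1/2 ≤ a ∧ a < 1 ∧ ∀ φ, a ≤ φ → φ < 1 → D φ / z φ < lam + ε := by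
    intro ε hε
    rcases eq_or_lt_of_le hlam with hlam0 | hlamneg
    · refine ⟨1/2, le_rfl, by norm_num, ?_⟩
      intro φ hφa hφ1
      have := div_neg_of_pos_of_neg (hD_pos φ ⟨by linarith, hφ1⟩) (zneg φ ⟨by linarith, hφ1⟩)
      linarith
    · obtain ⟨ε', hε'def⟩ : ∃ e : ℝ, e = min ε (-lam/2) := ⟨_, rfl⟩
      have hε'0 : 0 < ε' := by rw [hε'def]; exact lt_min hε (by linarith)
      have hε'ε : ε' ≤ ε := hε'def ▸ min_le_left _ _
      have hε'lam : lam + ε' < 0 := by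
        have : ε' ≤ -lam/2 := hε'def ▸ min_le_right _ _
        linarith
      obtain ⟨b₂, a₂, δ₂, hb₂le0, hb₂gt, ha₂H, ha₂1, hδ₂, hFband, hinv2⟩ :
          ∃ b₂ a₂ δ₂ : ℝ, b₂ ≤ 0 ∧ lam + ε' < b₂ ∧ 1/2 ≤ a₂ ∧ a₂ < 1 ∧ 0 < δ₂ ∧
            (∀ φ, a₂ ≤ φ → φ ≤ 1 → ∀ v, lam + ε' ≤ v → v ≤ b₂ →
              g φ*v^2 - (h φ - c)*v + D' φ ≤ -δ₂) ∧
            (∀ φ, a₂ ≤ φ → φ < 1 → D φ / z φ ≤ b₂) := by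
        rcases hP0 hlamneg with hD'neg | ⟨hD'0, hbneg⟩
        · have hPneg : ∀ v, lam + ε' ≤ v → v ≤ (0:ℝ) → g 1*v^2 - (h 1 - c)*v + D' 1 < 0 := by
            intro v h1 h2
            rcases eq_or_lt_of_le h2 with h20 | h20
            · subst h20; simpa using hD'neg
            · exact hPabove v (by linarith) h20
          obtain ⟨a₂, δ₂, hH, h1, hδ, hFb⟩ := hFneg (lam + ε') 0 (by linarith) hPneg
          refine ⟨0, a₂, δ₂, le_rfl, by linarith, hH, h1, hδ, hFb, ?_⟩
          intro φ hφa hφ1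
          exact (div_neg_of_pos_of_neg (hD_pos φ ⟨by linarith, hφ1⟩)
            (zneg φ ⟨by linarith, hφ1⟩)).le
        · obtain ⟨b₂, hb₂def⟩ : ∃ x : ℝ, x = (lam+ε')/2 := ⟨_, rfl⟩
          have hb₂neg : b₂ < 0 := by rw [hb₂def]; linarith
          have hb₂gt : lam + ε' < b₂ := by rw [hb₂def]; linarith
          have hPneg : ∀ v, lam + ε' ≤ v → v ≤ b₂ → g 1*v^2 - (h 1 - c)*v + D' 1 < 0 :=
            fun v h1 h2 => hPabove v (by linarith) (by linarith)
          obtain ⟨a₂, δ₂, hH, h1, hδ, hFb⟩ := hFneg (lam + ε') b₂ (by linarith) hPneg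
          have hS : 0 < g 1 * b₂ - (h 1 - c) := by
            have := hPneg b₂ hb₂gt.le le_rfl
            nlinarith
          obtain ⟨κ, hκdef⟩ : ∃ k : ℝ, k = (g 1 * b₂ - (h 1 - c))/2 := ⟨_, rfl⟩
          have hκ0 : 0 < κ := by rw [hκdef]; linarith
          obtain ⟨a₃, ha₃H, ha₃1, hctrl⟩ := hnear (κ/(2*(1+|b₂|))) (by positivity)
          refine ⟨b₂, max a₂ a₃, δ₂, hb₂neg.le, hb₂gt, le_trans hH (le_max_left _ _),
            max_lt h1 ha₃1, hδ, ?_, ?_⟩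
          · intro φ hφa hφ1 v hv1 hv2
            exact hFb φ (le_trans (le_max_left _ _) hφa) hφ1 v hv1 hv2
          · intro φ₁ hφ₁a hφ₁1
            by_contra hconb
            push_neg at hconb
            have hφ₁H : 1/2 ≤ φ₁ := le_trans (le_trans hH (le_max_left _ _)) hφ₁a
            have hgeb : ∀ x, φ₁ ≤ x → x < 1 → b₂ ≤ D x / z x := by
              intro x hx hx1
              refine stay_ge (ucont φ₁ x (by linarith) hx1) ?_ hconb.le x ⟨hx, le_rfl⟩
              intro y hy hyeq
              have hy0 : 0 < y := by linarith [hy.1]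
              have hy1 : y < 1 := lt_of_le_of_lt hy.2 hx1
              refine ⟨_, hu_deriv y hy0 hy1, ?_⟩
              have hFy : g y*(D y/z y)^2 - (h y - c)*(D y/z y) + D' y ≤ -δ₂ := by
                rw [hyeq]
                exact hFb y (le_trans (le_trans (le_max_left a₂ a₃) hφ₁a) hy.1) hy1.le b₂
                  hb₂gt.le le_rfl
              exact div_pos_of_neg_of_neg (by linarith) (zneg y ⟨hy0, hy1⟩)
            obtain ⟨ξ, hξ1, hξ2, hξeq⟩ := hzmvt φ₁ (by linarith) hφ₁1
            have hξa₃ : a₃ ≤ ξ := le_trans (le_trans (le_max_right a₂ a₃) hφ₁a) hξ1.le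
            obtain ⟨hgc, hhc, _⟩ := hctrl ξ hξa₃ hξ2.le
            have huξ : b₂ ≤ D ξ / z ξ := hgeb ξ hξ1.le hξ2
            have huξ0 : D ξ / z ξ < 0 := div_neg_of_pos_of_neg
              (hD_pos ξ ⟨by linarith, hξ2⟩) (zneg ξ ⟨by linarith, hξ2⟩)
            have hgnξ : 0 ≤ g ξ := hgnn ξ ⟨by linarith, hξ2.le⟩
            have key2 : h ξ - c - g ξ * b₂ ≤ -κ := by
              have e3 : κ/(2*(1+|b₂|)) ≤ κ/2 := by
                apply div_le_div_of_nonneg_left hκ0.le (by norm_num)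
                nlinarith [abs_nonneg b₂]
              have e4 : |(g ξ - g 1) * b₂| ≤ κ/2 := by
                rw [abs_mul]
                calc |g ξ - g 1| * |b₂| ≤ (κ/(2*(1+|b₂|))) * (1+|b₂|) :=
                      mul_le_mul hgc (by linarith [abs_nonneg b₂]) (abs_nonneg b₂)
                        (by positivity)
                  _ = κ/2 := by
                      have : (1:ℝ)+|b₂| ≠ 0 := by positivity
                      field_simp
              have e5 := (abs_le.mp hhc).2
              have e6 := abs_le.mp e4
              have hκeq : h 1 - c - g 1 * b₂ = -2*κ := by rw [hκdef]; ring
              have e7 : g ξ * b₂ = (g ξ - g 1)*b₂ + g 1 * b₂ := by ring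
              linarith [e5, e6.1, e6.2, e3, e7]
            have hz'ξ : h ξ - c - D ξ * g ξ / z ξ ≤ -κ := by
              have hrw : D ξ * g ξ / z ξ = g ξ * (D ξ / z ξ) := by ring
              rw [hrw]
              linarith [mul_le_mul_of_nonneg_left huξ hgnξ, key2]
            have hzφ₁ : z φ₁ < 0 := zneg φ₁ ⟨by linarith, hφ₁1⟩
            have h1φ' : (0:ℝ) < 1 - φ₁ := by linarith
            have m1 : (h ξ - c - D ξ * g ξ / z ξ)*(1-φ₁) ≤ (-κ)*(1-φ₁) :=
              mul_le_mul_of_nonneg_right hz'ξ h1φ'.le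
            have m2 : 0 < κ*(1-φ₁) := mul_pos hκ0 h1φ'
            linarith [hξeq, m1, m2]
      obtain ⟨a₁, ha₁H, ha₁1, hlow⟩ := lower ε' hε'0
      refine ⟨max a₁ a₂, le_trans ha₁H (le_max_left _ _), max_lt ha₁1 ha₂1, ?_⟩
      intro φ₀ hφ₀a hφ₀1
      by_contra hcon2
      push_neg at hcon2
      have hφ₀H : 1/2 ≤ φ₀ := le_trans (le_trans ha₁H (le_max_left _ _)) hφ₀a
      have hφ₀a₂ : a₂ ≤ φ₀ := le_trans (le_max_right a₁ a₂) hφ₀a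
      have hgeb2 : ∀ x, φ₀ ≤ x → x < 1 → lam + ε' ≤ D x / z x := by
        intro x hx hx1
        refine stay_ge (ucont φ₀ x (by linarith) hx1) ?_ (by linarith) x ⟨hx, le_rfl⟩
        intro y hy hyeq
        have hy0 : 0 < y := by linarith [hy.1]
        have hy1 : y < 1 := lt_of_le_of_lt hy.2 hx1
        refine ⟨_, hu_deriv y hy0 hy1, ?_⟩
        have hFy : g y*(D y/z y)^2 - (h y - c)*(D y/z y) + D' y ≤ -δ₂ := by
          rw [hyeq]
          exact hFband y (le_trans hφ₀a₂ hy.1) hy1.le _ le_rfl hb₂gt.le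
        exact div_pos_of_neg_of_neg (by linarith) (zneg y ⟨hy0, hy1⟩)
      have hK₂ : 0 < Ch + G*(-lam) := by nlinarith
      apply log_blowup (u := fun t => D t / z t)
        (u' := fun t => (g t*(D t / z t)^2 - (h t - c)*(D t / z t) + D' t) / z t)
        (φ₀ := φ₀) (η := δ₂/(Ch + G*(-lam))) (B := 0) hφ₀1 (by positivity)
      · intro r hr hr1; exact ucont φ₀ r (by linarith) hr1
      · intro t ht ht1; exact hu_deriv t (by linarith) ht1
      · intro t ht ht1
        have hu_t_ge : lam + ε' ≤ D t / z t := hgeb2 t ht.le ht1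
        have hu_t_le : D t / z t ≤ b₂ := hinv2 t (by linarith) ht1
        have hzb : -(z t) ≤ (Ch + G*(-lam))*(1-t) := by
          apply hzub t (-lam) (by linarith) ht1 (by linarith)
          intro x hx hx1
          have := hgeb2 x (by linarith) hx1
          linarith
        have hFt : g t*(D t/z t)^2 - (h t - c)*(D t/z t) + D' t ≤ -δ₂ :=
          hFband t (by linarith) ht1.le _ hu_t_ge hu_t_le
        have hzt : z t < 0 := zneg t ⟨by linarith, ht1⟩
        have hzt' : 0 < -(z t) := by linarith
        have h1t : 0 < 1 - t := by linarith
        have e1 : (g t*(D t/z t)^2 - (h t - c)*(D t/z t) + D' t) / z t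
            = (-(g t*(D t/z t)^2 - (h t - c)*(D t/z t) + D' t)) / (-(z t)) := by
          rw [neg_div_neg_eq]
        rw [e1]
        calc (δ₂/(Ch + G*(-lam)))/(1-t) = δ₂/((Ch + G*(-lam))*(1-t)) := by rw [div_div]
          _ ≤ δ₂/(-(z t)) := div_le_div_of_nonneg_left hδ₂.le hzt' hzb
          _ ≤ _ := div_le_div_of_nonneg_right (by linarith) hzt'.le
      · intro t ht ht1
        exact (div_neg_of_pos_of_neg (hD_pos t ⟨by linarith, ht1⟩)
          (zneg t ⟨by linarith, ht1⟩)).le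
  -- ASSEMBLY
  rw [Metric.tendsto_nhds]
  intro ε hε
  obtain ⟨a₁, ha₁H, ha₁1, hlow⟩ := lower (ε/2) (by linarith)
  obtain ⟨a₂, ha₂H, ha₂1, hup⟩ := upper (ε/2) (by linarith)
  have hmem : Ioo (max a₁ a₂) 1 ∈ 𝓝[<] (1:ℝ) :=
    Ioo_mem_nhdsLT_of_mem ⟨max_lt ha₁1 ha₂1, le_rfl⟩
  filter_upwards [hmem] with φ hφ
  rw [Real.dist_eq, abs_lt]
  constructor
  · have := hlow φ (le_trans (le_max_left _ _) hφ.1.le) hφ.2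
    linarith
  · have := hup φ (le_trans (le_max_right _ _) hφ.1.le) hφ.2
    linarith

/-- behavior of D(φ)/z(φ) as φ → 1⁻ for the solution z of
(P_c⁰⁰) with q = D·g, under (f), (D1), (g0), (Dg). -/
theorem stmt_19 (f h D D' g z : ℝ → ℝ) (cstar c : ℝ)
    -- (f)
    (hf0 : f 0 = 0)
    (hf' : ∀ x ∈ Icc (0:ℝ) 1, HasDerivWithinAt f (h x) (Icc 0 1) x)
    (hh_cont : ContinuousOn h (Icc 0 1))
    -- (D1)
    (hD' : ∀ x ∈ Icc (0:ℝ) 1, HasDerivWithinAt D (D' x) (Icc 0 1) x)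
    (hD'_cont : ContinuousOn D' (Icc 0 1))
    (hD_pos : ∀ φ ∈ Ioo (0:ℝ) 1, 0 < D φ)
    (hD1 : D 1 = 0)
    -- (g0)
    (hg_cont : ContinuousOn g (Icc 0 1))
    (hg_pos : ∀ φ ∈ Ioc (0:ℝ) 1, 0 < g φ)
    (hg0 : g 0 = 0)
    -- (Dg)
    (hDg : ∃ L : ℝ, ∀ᶠ φ in 𝓝[>] (0:ℝ), D φ * g φ / φ ≤ L)
    -- threshold and solution
    (hcstar : ∀ c' : ℝ, (∃ w : ℝ → ℝ, PC00 h (fun φ => D φ * g φ) c' w) ↔ cstar ≤ c')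
    (hc : cstar ≤ c)
    (hz : PC00 h (fun φ => D φ * g φ) c z) :
    (D' 1 < 0 →
      Tendsto (fun φ => D φ / z φ) (𝓝[<] (1:ℝ))
        (𝓝 ((h 1 - c - Real.sqrt ((h 1 - c) ^ 2 - 4 * D' 1 * g 1)) / (2 * g 1)))) ∧
    (D' 1 = 0 →
      Tendsto (fun φ => D φ / z φ) (𝓝[<] (1:ℝ))
        (𝓝 (min 0 ((h 1 - c) / g 1)))) := by
  obtain ⟨⟨⟨zc, zd, zneg⟩, z0⟩, z1⟩ := hz
  have g1pos : 0 < g 1 := hg_pos 1 ⟨one_pos, le_rfl⟩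
  constructor
  · -- case D'(1) < 0
    intro hD'1
    set b := h 1 - c with hb
    set s := Real.sqrt (b ^ 2 - 4 * D' 1 * g 1) with hs
    have hdisc : 0 < b ^ 2 - 4 * D' 1 * g 1 := by nlinarith [sq_nonneg b]
    have hs2 : s ^ 2 = b ^ 2 - 4 * D' 1 * g 1 := Real.sq_sqrt hdisc.le
    have hspos : 0 < s := Real.sqrt_pos.mpr hdisc
    have hsb : |b| < s := by
      have h1 : b^2 < s^2 := by nlinarith
      rcases abs_cases b with ⟨he, _⟩ | ⟨he, _⟩ <;> nlinarith
    have hlamneg : (b - s) / (2 * g 1) < 0 := by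
      apply div_neg_of_neg_of_pos
      · rcases abs_cases b with ⟨he, _⟩ | ⟨he, _⟩ <;> nlinarith
      · linarith
    -- factorization: P v = g1 (v - lam⁻)(v - lam⁺)
    have hfact : ∀ v : ℝ, g 1 * v^2 - b * v + D' 1
        = g 1 * (v - (b - s)/(2*g 1)) * (v - (b + s)/(2*g 1)) := by
      intro v
      have hg1 : g 1 ≠ 0 := ne_of_gt g1pos
      field_simp
      nlinarith [hs2]
    have hlampos : 0 < (b + s) / (2 * g 1) := by
      apply div_pos
      · rcases abs_cases b with ⟨he, _⟩ | ⟨he, _⟩ <;> nlinarith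
      · linarith
    apply core h D D' g z c _ hh_cont hD' hD'_cont hD_pos hD1 hg_cont hg_pos zc zd zneg z1
      hlamneg.le
    · intro v hv
      rw [← hb, hfact v]
      have h1 : v - (b - s)/(2*g 1) < 0 := by linarith
      have h2 : v - (b + s)/(2*g 1) < 0 := by linarith [hlamneg, hlampos]
      have := mul_pos g1pos (mul_pos_of_neg_of_neg h1 h2)
      calc (0:ℝ) < g 1 * ((v - (b - s)/(2*g 1)) * (v - (b + s)/(2*g 1))) := this
        _ = g 1 * (v - (b - s)/(2*g 1)) * (v - (b + s)/(2*g 1)) := by ring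
    · intro v hv1 hv2
      rw [← hb, hfact v]
      have h1 : 0 < v - (b - s)/(2*g 1) := by linarith
      have h2 : v - (b + s)/(2*g 1) < 0 := by linarith [hlampos]
      have := mul_neg_of_pos_of_neg (mul_pos g1pos h1) h2
      linarith [this]
    · intro _; exact Or.inl hD'1
  · -- case D'(1) = 0
    intro hD'1
    set b := h 1 - c with hb
    rcases le_or_gt 0 b with hbge | hblt
    · -- b ≥ 0 : limit 0
      have hmin : min 0 (b / g 1) = 0 := min_eq_left (by positivity)
      rw [hmin]
      apply core h D D' g z c 0 hh_cont hD' hD'_cont hD_pos hD1 hg_cont hg_pos zc zd zneg z1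
        le_rfl
      · intro v hv
        rw [← hb, hD'1]
        have : g 1 * v - b < 0 := by nlinarith
        nlinarith
      · intro v hv1 hv2; linarith
      · intro hlt; exact absurd hlt (lt_irrefl 0)
    · -- b < 0 : limit b / g 1
      have hmin : min 0 (b / g 1) = b / g 1 := min_eq_right (by
        apply le_of_lt; exact div_neg_of_neg_of_pos hblt g1pos)
      rw [hmin]
      have hμneg : b / g 1 < 0 := div_neg_of_neg_of_pos hblt g1pos
      have hfact : ∀ v : ℝ, g 1 * v^2 - b * v + D' 1 = g 1 * v * (v - b/g 1) := by
        intro v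
        rw [hD'1]
        field_simp
        ring
      apply core h D D' g z c _ hh_cont hD' hD'_cont hD_pos hD1 hg_cont hg_pos zc zd zneg z1
        hμneg.le
      · intro v hv
        rw [← hb, hfact v]
        have h1 : v < 0 := by linarith
        have h2 : v - b/g 1 < 0 := by linarith
        have := mul_pos g1pos (mul_pos_of_neg_of_neg h1 h2)
        calc (0:ℝ) < g 1 * (v * (v - b/g 1)) := this
          _ = g 1 * v * (v - b/g 1) := by ring
      · intro v hv1 hv2
        rw [← hb, hfact v]
        have h2 : 0 < v - b/g 1 := by linarith
        have := mul_neg_of_neg_of_pos (mul_neg_of_pos_of_neg g1pos hv2) h2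
        linarith [this]
      · intro _; exact Or.inr ⟨hD'1, hblt⟩
end
end
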